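/- arXiv:1710.03654 — 4 statements merged into one kernel-verified Lean document; each statement's English description precedes it below -/
import Mathlib

section
/- Consider the quantized spectral compressed sensing model with a general quantizer. Assume sigma > 0. Then the Fisher information matrix I(kappa) in R^{3K x 3K} for estimating the unknown parameter vector kappa, defined as I(kappa) = E[(d/dkappa log p(y|kappa)) (d/dkappa log p(y|kappa))^T] where the expectation is over the discrete random vector y, equals (1/(pi*sigma^2)) * sum_{i=1}^m [ Gamma_i^R(kappa) * (ds_i/dkappa)(ds_i/dkappa)^T + Gamma_i^I(kappa) * (dr_i/dkappa)(dr_i/dkappa)^T ]. -/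
open scoped BigOperators Real
open MeasureTheory ProbabilityTheory Finset

noncomputable section

/-- The spectral atom `v(f) = (1, e^{j2πf}, …, e^{j2π(n-1)f})ᵀ ∈ ℂⁿ`. -/
def vAtom (n : ℕ) (f : ℝ) : Fin n → ℂ :=
  fun k => Complex.exp (2 * Real.pi * Complex.I * f * (k : ℕ))

/-- `⟨a, x⟩ = aᴴ x`. -/
def dotH {n : ℕ} (a x : Fin n → ℂ) : ℂ := ∑ k, (starRingEnd ℂ) (a k) * x k

/-- The index in `Fin (3K)` of the `j`-th parameter (`j = 0`: frequency, `j = 1`: amplitude,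
`j = 2`: phase) of the `k`-th sinusoid. -/
def pidx {K : ℕ} (k : Fin K) (j : Fin 3) : Fin (3 * K) :=
  ⟨3 * k.val + j.val, by have := k.isLt; have := j.isLt; omega⟩

/-- The signal `x⋆(κ) = ∑ₖ Aₖ e^{j2πφₖ} v(fₖ)` parametrized by
`κ = (fₖ, Aₖ, φₖ)ₖ ∈ ℝ^{3K}`. -/
def xstar (n K : ℕ) (κ : Fin (3 * K) → ℝ) : Fin n → ℂ :=
  ∑ k : Fin K,
    ((κ (pidx k 1) : ℂ) * Complex.exp (2 * Real.pi * Complex.I * κ (pidx k 2))) •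
      vAtom n (κ (pidx k 0))

/-- `sᵢ(κ) = Re⟨aᵢ, x⋆(κ)⟩`. -/
def sFun (n K : ℕ) (a : Fin n → ℂ) (κ : Fin (3 * K) → ℝ) : ℝ := (dotH a (xstar n K κ)).re

/-- `rᵢ(κ) = Im⟨aᵢ, x⋆(κ)⟩`. -/
def rFun (n K : ℕ) (a : Fin n → ℂ) (κ : Fin (3 * K) → ℝ) : ℝ := (dotH a (xstar n K κ)).im

/-- `Φ(u) = (1/√π) ∫_0^u e^{-t²} dt`. -/
def Φq (u : ℝ) : ℝ := (Real.sqrt Real.pi)⁻¹ * ∫ t in (0:ℝ)..u, Real.exp (-t ^ 2)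

/-- `Φ((u - s)/σ)`, extended to the infinite breakpoints by `Φ(∓∞) = ∓1/2`. -/
def Φe (σ s : ℝ) (u : EReal) : ℝ :=
  if u = ⊥ then -(1 / 2) else if u = ⊤ then 1 / 2 else Φq ((u.toReal - s) / σ)

/-- `e^{-(u-s)²/σ²}`, extended by `0` at the infinite breakpoints. -/
def Ge (σ s : ℝ) (u : EReal) : ℝ :=
  if u = ⊥ ∨ u = ⊤ then 0 else Real.exp (-(u.toReal - s) ^ 2 / σ ^ 2)

/-- The probability that a real Gaussian with mean `s` and variance `σ²/2` lands in the
quantization cell `[a, b)` (with extended-real endpoints). -/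
def cellProb (σ s : ℝ) (a b : EReal) : ℝ :=
  ((gaussianReal s (Real.toNNReal (σ ^ 2 / 2)))
    {x : ℝ | a ≤ (x : EReal) ∧ (x : EReal) < b}).toReal

/-- The outer product `(∇g)(∇h)ᵀ` of the gradients of `g, h : ℝᵈ → ℝ` at `κ`, written with
partial derivatives (directional derivatives along the coordinate directions). -/
def outerGrad {d : ℕ} (g h : (Fin d → ℝ) → ℝ) (κ : Fin d → ℝ) :
    Matrix (Fin d) (Fin d) ℝ :=
  Matrix.of fun j j' => fderiv ℝ g κ (Pi.single j 1) * fderiv ℝ h κ (Pi.single j' 1)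

/-- The probability of observing the outcome indexed by the cells `ρ` (one pair of cells per
measurement: one for the quantized real part, one for the quantized imaginary part). -/
def jointProb (n m K L : ℕ) (σ : ℝ) (A : Fin m → Fin n → ℂ) (t : Fin (L + 1) → EReal)
    (ρ : Fin m → Fin L × Fin L) (κ : Fin (3 * K) → ℝ) : ℝ :=
  ∏ i : Fin m,
    cellProb σ (sFun n K (A i) κ) (t (ρ i).1.castSucc) (t (ρ i).1.succ) *
      cellProb σ (rFun n K (A i) κ) (t (ρ i).2.castSucc) (t (ρ i).2.succ)

/-- The Fisher information matrix `I(κ) = E[(∇ log p(y|κ))(∇ log p(y|κ))ᵀ]`, where the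
expectation over the discrete random vector `y` is the sum over all quantization outcomes,
weighted by their probabilities. -/
def FIM (n m K L : ℕ) (σ : ℝ) (A : Fin m → Fin n → ℂ) (t : Fin (L + 1) → EReal)
    (κ : Fin (3 * K) → ℝ) : Matrix (Fin (3 * K)) (Fin (3 * K)) ℝ :=
  ∑ ρ : Fin m → Fin L × Fin L,
    jointProb n m K L σ A t ρ κ •
      outerGrad (fun κ' => Real.log (jointProb n m K L σ A t ρ κ'))
        (fun κ' => Real.log (jointProb n m K L σ A t ρ κ')) κ

/-- `Γᵢ` for a mean function value `s`: the sum over the quantization cells of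
`[e^{-(t_{ℓ+1}-s)²/σ²} - e^{-(t_ℓ-s)²/σ²}]² / [Φ((t_{ℓ+1}-s)/σ) - Φ((t_ℓ-s)/σ)]`. -/
def Γq (L : ℕ) (σ : ℝ) (t : Fin (L + 1) → EReal) (s : ℝ) : ℝ :=
  ∑ ℓ : Fin L,
    (Ge σ s (t ℓ.succ) - Ge σ s (t ℓ.castSucc)) ^ 2 /
      (Φe σ s (t ℓ.succ) - Φe σ s (t ℓ.castSucc))

open scoped NNReal

namespace FisherAux

def pdfσ (σ s x : ℝ) : ℝ := (σ * Real.sqrt Real.pi)⁻¹ * Real.exp (-(x - s) ^ 2 / σ ^ 2)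

lemma sqrtpi_pos : 0 < Real.sqrt Real.pi := Real.sqrt_pos.mpr Real.pi_pos

lemma gaussianPDFReal_eq {σ : ℝ} (hσ : 0 < σ) (s : ℝ) :
    gaussianPDFReal s (Real.toNNReal (σ ^ 2 / 2)) = pdfσ σ s := by
  funext x
  have h2 : ((Real.toNNReal (σ ^ 2 / 2) : ℝ≥0) : ℝ) = σ ^ 2 / 2 :=
    Real.coe_toNNReal _ (by positivity)
  simp only [gaussianPDFReal, pdfσ]
  rw [h2]
  congr 1
  · rw [show 2 * Real.pi * (σ ^ 2 / 2) = Real.pi * σ ^ 2 by ring,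
      Real.sqrt_mul Real.pi_pos.le, Real.sqrt_sq hσ.le, mul_comm]
  · congr 1
    rw [show 2 * (σ ^ 2 / 2) = σ ^ 2 by ring]

lemma cont_pdf (σ s : ℝ) : Continuous (pdfσ σ s) := by
  unfold pdfσ; fun_prop

lemma integrable_pdf {σ : ℝ} (hσ : 0 < σ) (s : ℝ) : Integrable (pdfσ σ s) := by
  have h : Integrable (fun x : ℝ => Real.exp (-(σ ^ 2)⁻¹ * x ^ 2)) :=
    integrable_exp_neg_mul_sq (by positivity)
  have h2 := (h.comp_sub_right s).const_mul ((σ * Real.sqrt Real.pi)⁻¹)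
  refine h2.congr ?_
  filter_upwards with x
  unfold pdfσ
  congr 1
  congr 1
  field_simp

lemma hasDerivAt_Φq (u : ℝ) :
    HasDerivAt Φq ((Real.sqrt Real.pi)⁻¹ * Real.exp (-u ^ 2)) u := by
  have hc : Continuous (fun t : ℝ => Real.exp (-t ^ 2)) := by fun_prop
  have h := intervalIntegral.integral_hasDerivAt_right
    (hc.intervalIntegrable 0 u)
    hc.aestronglyMeasurable.stronglyMeasurableAtFilter hc.continuousAt
  exact h.const_mul _

lemma hasDerivAt_anti {σ : ℝ} (hσ : 0 < σ) (s u : ℝ) :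
    HasDerivAt (fun u => Φq ((u - s) / σ)) (pdfσ σ s u) u := by
  have h1 : HasDerivAt (fun u : ℝ => (u - s) / σ) (1 / σ) u := by
    simpa using ((hasDerivAt_id u).sub_const s).div_const σ
  have h2 := (hasDerivAt_Φq ((u - s) / σ)).comp u h1
  refine h2.congr_deriv ?_
  unfold pdfσ
  rw [div_pow, neg_div]
  ring

lemma integral_pdf_ab {σ : ℝ} (hσ : 0 < σ) (s a b : ℝ) :
    ∫ x in a..b, pdfσ σ s x = Φq ((b - s) / σ) - Φq ((a - s) / σ) :=
  intervalIntegral.integral_eq_sub_of_hasDerivAt (fun x _ => hasDerivAt_anti hσ s x)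
    ((cont_pdf σ s).intervalIntegrable a b)

lemma integrable_gauss1 : Integrable (fun t : ℝ => Real.exp (-t ^ 2)) := by
  have := integrable_exp_neg_mul_sq (b := 1) one_pos
  simpa using this

lemma iic_gauss : ∫ t in Set.Iic (0 : ℝ), Real.exp (-t ^ 2) = Real.sqrt Real.pi / 2 := by
  have h := intervalIntegral.integral_Iic_add_Ioi (b := (0:ℝ)) integrable_gauss1.integrableOn
    integrable_gauss1.integrableOn
  have h1 : ∫ t in Set.Ioi (0 : ℝ), Real.exp (-t ^ 2) = Real.sqrt Real.pi / 2 := by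
    have := integral_gaussian_Ioi 1
    simpa using this
  have h2 : ∫ t : ℝ, Real.exp (-t ^ 2) = Real.sqrt Real.pi := by
    have := integral_gaussian 1
    simpa using this
  rw [h1, h2] at h
  linarith

lemma tendsto_Φq_atBot : Filter.Tendsto Φq Filter.atBot (nhds (-(1 / 2))) := by
  have h := intervalIntegral_tendsto_integral_Iic (0:ℝ)
    integrable_gauss1.integrableOn Filter.tendsto_id
  have heq : Φq = fun u => (Real.sqrt Real.pi)⁻¹ * (-∫ t in u..(0:ℝ), Real.exp (-t ^ 2)) := by
    funext u
    rw [Φq, ← intervalIntegral.integral_symm]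
  rw [heq]
  have h2 := (h.neg).const_mul ((Real.sqrt Real.pi)⁻¹)
  convert h2 using 2
  · rfl
  rw [iic_gauss]
  field_simp


def Pc (σ : ℝ) (a b : EReal) (s : ℝ) : ℝ := Φe σ s b - Φe σ s a

lemma hv {σ : ℝ} (hσ : 0 < σ) : Real.toNNReal (σ ^ 2 / 2) ≠ 0 :=
  (Real.toNNReal_pos.mpr (by positivity)).ne'

lemma meas_set {σ : ℝ} (hσ : 0 < σ) (s : ℝ) {S : Set ℝ} (hS : MeasurableSet S) :
    ((gaussianReal s (Real.toNNReal (σ ^ 2 / 2))) S).toReal = ∫ x in S, pdfσ σ s x := by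
  rw [gaussianReal_apply_eq_integral _ (hv hσ), gaussianPDFReal_eq hσ,
    ENNReal.toReal_ofReal]
  exact setIntegral_nonneg hS fun x _ =>
    mul_nonneg (inv_nonneg.2 (mul_nonneg hσ.le (Real.sqrt_nonneg _))) (Real.exp_pos _).le

lemma setIco (a b : ℝ) :
    {x : ℝ | ((a : ℝ) : EReal) ≤ (x : EReal) ∧ (x : EReal) < ((b : ℝ) : EReal)} = Set.Ico a b := by
  ext x; simp [EReal.coe_le_coe_iff, EReal.coe_lt_coe_iff]

lemma setIio (b : ℝ) :
    {x : ℝ | (⊥ : EReal) ≤ (x : EReal) ∧ (x : EReal) < ((b : ℝ) : EReal)} = Set.Iio b := by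
  ext x; simp [EReal.coe_lt_coe_iff]

lemma setIci (a : ℝ) :
    {x : ℝ | ((a : ℝ) : EReal) ≤ (x : EReal) ∧ (x : EReal) < (⊤ : EReal)} = Set.Ici a := by
  ext x; simp [EReal.coe_le_coe_iff, EReal.coe_lt_top]

lemma setUniv :
    {x : ℝ | (⊥ : EReal) ≤ (x : EReal) ∧ (x : EReal) < (⊤ : EReal)} = Set.univ := by
  ext x; simp [EReal.coe_lt_top]

lemma integral_pdf_Iic {σ : ℝ} (hσ : 0 < σ) (s b : ℝ) :
    ∫ x in Set.Iic b, pdfσ σ s x = Φq ((b - s) / σ) + 1 / 2 := by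
  have h1 := intervalIntegral_tendsto_integral_Iic b (integrable_pdf hσ s).integrableOn
    Filter.tendsto_id
  have hcomp : Filter.Tendsto (fun a : ℝ => (a - s) / σ) Filter.atBot Filter.atBot := by
    apply Filter.Tendsto.atBot_div_const hσ
    simpa [sub_eq_add_neg] using
      Filter.tendsto_atBot_add_const_right Filter.atBot (-s) Filter.tendsto_id
  have h2 : Filter.Tendsto (fun a : ℝ => Φq ((b - s) / σ) - Φq ((a - s) / σ)) Filter.atBot
      (nhds (Φq ((b - s) / σ) - -(1 / 2))) :=
    tendsto_const_nhds.sub (tendsto_Φq_atBot.comp hcomp)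
  have h3 : Filter.Tendsto (fun a : ℝ => ∫ x in a..b, pdfσ σ s x) Filter.atBot
      (nhds (Φq ((b - s) / σ) - -(1 / 2))) :=
    h2.congr fun a => (integral_pdf_ab hσ s a b).symm
  have := tendsto_nhds_unique h1 h3
  rw [this]; ring

lemma meas_Iio {σ : ℝ} (hσ : 0 < σ) (s b : ℝ) :
    ((gaussianReal s (Real.toNNReal (σ ^ 2 / 2))) (Set.Iio b)).toReal
      = Φq ((b - s) / σ) + 1 / 2 := by
  rw [meas_set hσ s measurableSet_Iio, ← integral_Iic_eq_integral_Iio, integral_pdf_Iic hσ]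

lemma cellProb_coe_coe {σ : ℝ} (hσ : 0 < σ) (s a b : ℝ) (hab : a ≤ b) :
    cellProb σ s a b = Φq ((b - s) / σ) - Φq ((a - s) / σ) := by
  unfold cellProb
  rw [setIco, meas_set hσ s measurableSet_Ico, integral_Ico_eq_integral_Ioo,
    ← integral_Ioc_eq_integral_Ioo, ← intervalIntegral.integral_of_le hab,
    integral_pdf_ab hσ]

lemma cellProb_bot_coe {σ : ℝ} (hσ : 0 < σ) (s b : ℝ) :
    cellProb σ s ⊥ b = Φq ((b - s) / σ) + 1 / 2 := by
  unfold cellProb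
  rw [setIio, meas_Iio hσ]

lemma cellProb_coe_top {σ : ℝ} (hσ : 0 < σ) (s a : ℝ) :
    cellProb σ s a ⊤ = 1 / 2 - Φq ((a - s) / σ) := by
  unfold cellProb
  rw [setIci]
  set ν := gaussianReal s (Real.toNNReal (σ ^ 2 / 2)) with hν
  have hadd := measure_add_measure_compl (μ := ν) (measurableSet_Iio (a := a))
  rw [Set.compl_Iio, measure_univ] at hadd
  have h1 : ν (Set.Iio a) ≠ ⊤ := measure_ne_top _ _
  have h2 : ν (Set.Ici a) ≠ ⊤ := measure_ne_top _ _
  have := congrArg ENNReal.toReal hadd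
  rw [ENNReal.toReal_add h1 h2, ENNReal.toReal_one] at this
  have h3 := meas_Iio hσ s a
  rw [← hν] at h3
  linarith

lemma cellProb_bot_top {σ : ℝ} (hσ : 0 < σ) (s : ℝ) : cellProb σ s ⊥ ⊤ = 1 := by
  unfold cellProb
  rw [setUniv, measure_univ, ENNReal.toReal_one]

lemma cellProb_eq_Pc {σ : ℝ} (hσ : 0 < σ) (s : ℝ) {a b : EReal} (hab : a < b) :
    cellProb σ s a b = Pc σ a b s := by
  induction a using EReal.rec with
  | bot =>
    induction b using EReal.rec with
    | bot => simp at hab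
    | coe b => rw [cellProb_bot_coe hσ]; simp [Pc, Φe]
    | top => rw [cellProb_bot_top hσ]; simp [Pc, Φe]; norm_num
  | coe a =>
    induction b using EReal.rec with
    | bot => exact absurd hab (by simp)
    | coe b =>
      have hab' : a ≤ b := by exact_mod_cast hab.le
      rw [cellProb_coe_coe hσ s a b hab']; simp [Pc, Φe]
    | top => rw [cellProb_coe_top hσ]; simp [Pc, Φe]
  | top => exact absurd hab (by simp)

lemma cellProb_pos {σ : ℝ} (hσ : 0 < σ) (s : ℝ) {a b : EReal} (hab : a < b) :
    0 < cellProb σ s a b := by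
  have hvol : volume {x : ℝ | a ≤ (x : EReal) ∧ (x : EReal) < b} ≠ 0 := by
    induction a using EReal.rec with
    | bot =>
      induction b using EReal.rec with
      | bot => simp at hab
      | coe b => rw [setIio]; simp [Real.volume_Iio]
      | top => rw [setUniv]; simp [Real.volume_univ]
    | coe a =>
      induction b using EReal.rec with
      | bot => exact absurd hab (by simp)
      | coe b =>
        have hab' : a < b := by exact_mod_cast hab
        rw [setIco, Real.volume_Ico]
        simp only [ne_eq, ENNReal.ofReal_eq_zero, not_le]
        linarith
      | top => rw [setIci]; simp [Real.volume_Ici]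
    | top => exact absurd hab (by simp)
  have habs := gaussianReal_absolutelyContinuous' s (hv hσ)
  have hne : (gaussianReal s (Real.toNNReal (σ ^ 2 / 2)))
      {x : ℝ | a ≤ (x : EReal) ∧ (x : EReal) < b} ≠ 0 := fun h0 => hvol (habs h0)
  exact ENNReal.toReal_pos hne (measure_ne_top _ _)

def Fint {L : ℕ} (σ s : ℝ) (t : Fin (L + 1) → EReal) (i : ℕ) : ℝ :=
  Φe σ s (t ⟨min i L, Nat.lt_succ_of_le (min_le_right _ _)⟩)

lemma sum_Pc_one {σ : ℝ} {L : ℕ} (t : Fin (L + 1) → EReal)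
    (ht0 : t 0 = ⊥) (htL : t (Fin.last L) = ⊤) (s : ℝ) :
    ∑ ℓ : Fin L, Pc σ (t ℓ.castSucc) (t ℓ.succ) s = 1 := by
  have key : ∀ ℓ : Fin L, Pc σ (t ℓ.castSucc) (t ℓ.succ) s
      = Fint σ s t ((ℓ : ℕ) + 1) - Fint σ s t (ℓ : ℕ) := by
    intro ℓ
    have e1 : (⟨min ((ℓ : ℕ) + 1) L, Nat.lt_succ_of_le (min_le_right _ _)⟩ : Fin (L + 1))
        = ℓ.succ := Fin.ext (by simp [Nat.min_eq_left (Nat.succ_le_of_lt ℓ.isLt)])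
    have e2 : (⟨min (ℓ : ℕ) L, Nat.lt_succ_of_le (min_le_right _ _)⟩ : Fin (L + 1))
        = ℓ.castSucc := Fin.ext (by simp [Nat.min_eq_left ℓ.isLt.le])
    unfold Pc Fint
    rw [e1, e2]
  rw [Finset.sum_congr rfl fun ℓ _ => key ℓ,
    Fin.sum_univ_eq_sum_range (fun i => Fint σ s t (i + 1) - Fint σ s t i) L,
    Finset.sum_range_sub (Fint σ s t) L]
  have eL : (⟨min L L, Nat.lt_succ_of_le (min_le_right _ _)⟩ : Fin (L + 1)) = Fin.last L :=
    Fin.ext (by simp)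
  have e0 : (⟨min 0 L, Nat.lt_succ_of_le (min_le_right _ _)⟩ : Fin (L + 1)) = 0 :=
    Fin.ext (by simp)
  unfold Fint
  rw [eL, e0, htL, ht0]
  simp [Φe]
  norm_num

lemma hasDerivAt_Φe {σ : ℝ} (hσ : 0 < σ) (u : EReal) (s : ℝ) :
    HasDerivAt (fun s' => Φe σ s' u) (-((σ * Real.sqrt Real.pi)⁻¹ * Ge σ s u)) s := by
  induction u using EReal.rec with
  | bot =>
    have : (fun s' => Φe σ s' (⊥ : EReal)) = fun _ => -(1 / 2 : ℝ) := by
      funext s'; simp [Φe]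
    rw [this]
    simpa [Ge] using hasDerivAt_const s (-(1 / 2 : ℝ))
  | coe x =>
    have h1 : HasDerivAt (fun s' : ℝ => (x - s') / σ) (-1 / σ) s := by
      simpa using ((hasDerivAt_id s).const_sub x).div_const σ
    have h2 := (hasDerivAt_Φq ((x - s) / σ)).comp s h1
    have heq : (fun s' => Φe σ s' (x : EReal)) = fun s' => Φq ((x - s') / σ) := by
      funext s'; simp [Φe]
    rw [heq]
    refine h2.congr_deriv ?_
    simp only [Ge, EReal.coe_ne_bot, EReal.coe_ne_top, or_self, if_false, EReal.toReal_coe]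
    rw [div_pow, neg_div]
    ring
  | top =>
    have : (fun s' => Φe σ s' (⊤ : EReal)) = fun _ => (1 / 2 : ℝ) := by
      funext s'; simp [Φe]
    rw [this]
    simpa [Ge] using hasDerivAt_const s (1 / 2 : ℝ)

lemma hasDerivAt_Pc {σ : ℝ} (hσ : 0 < σ) (a b : EReal) (s : ℝ) :
    HasDerivAt (fun s' => Pc σ a b s')
      ((σ * Real.sqrt Real.pi)⁻¹ * (Ge σ s a - Ge σ s b)) s := by
  have h := (hasDerivAt_Φe hσ b s).sub (hasDerivAt_Φe hσ a s)
  have heq : (fun s' => Pc σ a b s') = fun s' => Φe σ s' b - Φe σ s' a := rfl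
  rw [heq]
  exact h.congr_deriv (by ring)

lemma hasFDerivAt_Pc_comp {σ : ℝ} {d : ℕ} (hσ : 0 < σ) (a b : EReal)
    {μf : (Fin d → ℝ) → ℝ} (hμ : Differentiable ℝ μf) (κ : Fin d → ℝ) :
    HasFDerivAt (fun κ' => Pc σ a b (μf κ'))
      (((σ * Real.sqrt Real.pi)⁻¹ * (Ge σ (μf κ) a - Ge σ (μf κ) b)) • fderiv ℝ μf κ) κ :=
  (hasDerivAt_Pc hσ a b (μf κ)).comp_hasFDerivAt κ (hμ κ).hasFDerivAt

lemma sumprod {C : Type*} [Fintype C] [DecidableEq C] {L : ℕ} (h : C → Fin L → ℝ) :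
    ∑ ρ : C → Fin L, ∏ c, h c (ρ c) = ∏ c, ∑ ℓ, h c ℓ := (Fintype.prod_sum h).symm

lemma prod_split {C : Type*} [Fintype C] [DecidableEq C] (f : C → ℝ) (c : C) :
    ∏ x : C, f x = f c * ∏ x ∈ Finset.univ.erase c, f x :=
  (Finset.mul_prod_erase _ _ (Finset.mem_univ c)).symm

lemma prod_split2 {C : Type*} [Fintype C] [DecidableEq C] (f : C → ℝ) {c c' : C} (hne : c ≠ c') :
    ∏ x : C, f x = f c * (f c' * ∏ x ∈ (Finset.univ.erase c).erase c', f x) := by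
  rw [prod_split f c,
    ← Finset.mul_prod_erase _ f (Finset.mem_erase.mpr ⟨hne.symm, Finset.mem_univ _⟩)]

lemma E_single {C : Type*} [Fintype C] [DecidableEq C] {L : ℕ} (w : C → Fin L → ℝ)
    (hw1 : ∀ c, ∑ ℓ, w c ℓ = 1) (c : C) (H : Fin L → ℝ) :
    ∑ ρ : C → Fin L, (∏ c'', w c'' (ρ c'')) * H (ρ c) = ∑ ℓ, w c ℓ * H ℓ := by
  classical
  set h : C → Fin L → ℝ := fun c'' ℓ => if c'' = c then w c ℓ * H ℓ else w c'' ℓ with hh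
  have hA : ∀ ρ : C → Fin L,
      (∏ c'', w c'' (ρ c'')) * H (ρ c) = ∏ c'', h c'' (ρ c'') := by
    intro ρ
    rw [prod_split (fun c'' => h c'' (ρ c'')) c, prod_split (fun c'' => w c'' (ρ c'')) c]
    have h1 : h c (ρ c) = w c (ρ c) * H (ρ c) := by simp [hh]
    have h2 : ∀ x ∈ Finset.univ.erase c, h x (ρ x) = w x (ρ x) := by
      intro x hx; simp [hh, Finset.ne_of_mem_erase hx]
    rw [h1, Finset.prod_congr rfl h2]
    ring
  rw [Finset.sum_congr rfl fun ρ _ => hA ρ, sumprod, prod_split (fun c'' => ∑ ℓ, h c'' ℓ) c]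
  have h1 : ∑ ℓ, h c ℓ = ∑ ℓ, w c ℓ * H ℓ := by
    apply Finset.sum_congr rfl; intro ℓ _; simp [hh]
  have h2 : ∀ x ∈ Finset.univ.erase c, ∑ ℓ, h x ℓ = 1 := by
    intro x hx
    have hx' : ∑ ℓ, h x ℓ = ∑ ℓ, w x ℓ :=
      Finset.sum_congr rfl fun ℓ _ => by simp [hh, Finset.ne_of_mem_erase hx]
    rw [hx']; exact hw1 x
  rw [h1, Finset.prod_congr rfl h2, Finset.prod_const_one, mul_one]

lemma E_pair {C : Type*} [Fintype C] [DecidableEq C] {L : ℕ} (w : C → Fin L → ℝ)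
    (hw1 : ∀ c, ∑ ℓ, w c ℓ = 1) {c c' : C} (hne : c ≠ c') (F G : Fin L → ℝ) :
    ∑ ρ : C → Fin L, (∏ c'', w c'' (ρ c'')) * (F (ρ c) * G (ρ c'))
      = (∑ ℓ, w c ℓ * F ℓ) * (∑ ℓ, w c' ℓ * G ℓ) := by
  classical
  set h : C → Fin L → ℝ := fun c'' ℓ =>
    if c'' = c then w c ℓ * F ℓ else if c'' = c' then w c' ℓ * G ℓ else w c'' ℓ with hh
  have hA : ∀ ρ : C → Fin L,
      (∏ c'', w c'' (ρ c'')) * (F (ρ c) * G (ρ c')) = ∏ c'', h c'' (ρ c'') := by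
    intro ρ
    rw [prod_split2 (fun c'' => h c'' (ρ c'')) hne, prod_split2 (fun c'' => w c'' (ρ c'')) hne]
    have h1 : h c (ρ c) = w c (ρ c) * F (ρ c) := by simp [hh]
    have h2 : h c' (ρ c') = w c' (ρ c') * G (ρ c') := by simp [hh, hne.symm]
    have h3 : ∀ x ∈ (Finset.univ.erase c).erase c', h x (ρ x) = w x (ρ x) := by
      intro x hx
      have hx1 : x ≠ c' := Finset.ne_of_mem_erase hx
      have hx2 : x ≠ c := Finset.ne_of_mem_erase (Finset.mem_of_mem_erase hx)
      simp [hh, hx1, hx2]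
    rw [h1, h2, Finset.prod_congr rfl h3]
    ring
  rw [Finset.sum_congr rfl fun ρ _ => hA ρ, sumprod,
    prod_split2 (fun c'' => ∑ ℓ, h c'' ℓ) hne]
  have h1 : ∑ ℓ, h c ℓ = ∑ ℓ, w c ℓ * F ℓ :=
    Finset.sum_congr rfl fun ℓ _ => by simp [hh]
  have h2 : ∑ ℓ, h c' ℓ = ∑ ℓ, w c' ℓ * G ℓ :=
    Finset.sum_congr rfl fun ℓ _ => by simp [hh, hne.symm]
  have h3 : ∀ x ∈ (Finset.univ.erase c).erase c', ∑ ℓ, h x ℓ = 1 := by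
    intro x hx
    have hx1 : x ≠ c' := Finset.ne_of_mem_erase hx
    have hx2 : x ≠ c := Finset.ne_of_mem_erase (Finset.mem_of_mem_erase hx)
    have hx' : ∑ ℓ, h x ℓ = ∑ ℓ, w x ℓ :=
      Finset.sum_congr rfl fun ℓ _ => by simp [hh, hx1, hx2]
    rw [hx']; exact hw1 x
  rw [h1, h2, Finset.prod_congr rfl h3, Finset.prod_const_one, mul_one]

lemma fisher_entry {C : Type*} [Fintype C] [DecidableEq C] {L : ℕ} (w X Y : C → Fin L → ℝ)
    (hw1 : ∀ c, ∑ ℓ, w c ℓ = 1)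
    (hX0 : ∀ c, ∑ ℓ, w c ℓ * X c ℓ = 0) (hY0 : ∀ c, ∑ ℓ, w c ℓ * Y c ℓ = 0) :
    ∑ ρ : C → Fin L, (∏ c, w c (ρ c)) * ((∑ c, X c (ρ c)) * (∑ c, Y c (ρ c)))
      = ∑ c, ∑ ℓ, w c ℓ * (X c ℓ * Y c ℓ) := by
  classical
  have expand : ∀ ρ : C → Fin L,
      (∏ c, w c (ρ c)) * ((∑ c, X c (ρ c)) * (∑ c, Y c (ρ c)))
        = ∑ c, ∑ c', (∏ c'', w c'' (ρ c'')) * (X c (ρ c) * Y c' (ρ c')) := by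
    intro ρ
    rw [Finset.sum_mul_sum, Finset.mul_sum]
    refine Finset.sum_congr rfl fun c _ => ?_
    rw [Finset.mul_sum]
  rw [Finset.sum_congr rfl fun ρ _ => expand ρ, Finset.sum_comm]
  refine Finset.sum_congr rfl fun c _ => ?_
  rw [Finset.sum_comm]
  rw [Finset.sum_eq_single c
    (fun c' _ hcc => by
      rw [E_pair w hw1 (Ne.symm hcc) (X c) (Y c'), hX0 c, zero_mul])
    (fun hc => absurd (Finset.mem_univ c) hc)]
  exact E_single w hw1 c (fun ℓ => X c ℓ * Y c ℓ)

lemma fisher_core {C : Type*} [Fintype C] [DecidableEq C] {L d : ℕ}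
    (q : C → Fin L → (Fin d → ℝ) → ℝ) (κ : Fin d → ℝ)
    (hpos : ∀ c ℓ κ', 0 < q c ℓ κ')
    (hdiff : ∀ c ℓ, Differentiable ℝ (q c ℓ))
    (hsum : ∀ c, (fun κ' => ∑ ℓ, q c ℓ κ') = fun _ => (1 : ℝ))
    (j j' : Fin d) :
    ∑ ρ : C → Fin L, (∏ c, q c (ρ c) κ) *
        (fderiv ℝ (fun κ' => Real.log (∏ c, q c (ρ c) κ')) κ (Pi.single j 1) *
         fderiv ℝ (fun κ' => Real.log (∏ c, q c (ρ c) κ')) κ (Pi.single j' 1))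
      = ∑ c, ∑ ℓ, (q c ℓ κ)⁻¹ *
          (fderiv ℝ (q c ℓ) κ (Pi.single j 1) * fderiv ℝ (q c ℓ) κ (Pi.single j' 1)) := by
  classical
  have hlog : ∀ ρ : C → Fin L,
      fderiv ℝ (fun κ' => Real.log (∏ c, q c (ρ c) κ')) κ
        = ∑ c, (q c (ρ c) κ)⁻¹ • fderiv ℝ (q c (ρ c)) κ := by
    intro ρ
    have heq : (fun κ' => Real.log (∏ c, q c (ρ c) κ'))
        = fun κ' => ∑ c, Real.log (q c (ρ c) κ') := by
      funext κ'
      exact Real.log_prod fun c _ => (hpos c (ρ c) κ').ne'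
    rw [heq]
    exact (HasFDerivAt.fun_sum fun c _ =>
      ((hdiff c (ρ c) κ).hasFDerivAt).log (hpos c (ρ c) κ).ne').fderiv
  have hD0 : ∀ c, (∑ ℓ, fderiv ℝ (q c ℓ) κ) = 0 := by
    intro c
    have h1 : HasFDerivAt (fun κ' => ∑ ℓ, q c ℓ κ') (∑ ℓ, fderiv ℝ (q c ℓ) κ) κ :=
      HasFDerivAt.fun_sum fun ℓ _ => (hdiff c ℓ κ).hasFDerivAt
    rw [hsum c] at h1
    exact h1.unique (hasFDerivAt_const 1 κ)
  have hD0' : ∀ (c : C) (v : Fin d → ℝ), ∑ ℓ, fderiv ℝ (q c ℓ) κ v = 0 := by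
    intro c v
    rw [← ContinuousLinearMap.sum_apply, hD0 c]
    rfl
  have key := fisher_entry (fun c ℓ => q c ℓ κ)
    (fun c ℓ => (q c ℓ κ)⁻¹ * fderiv ℝ (q c ℓ) κ (Pi.single j 1))
    (fun c ℓ => (q c ℓ κ)⁻¹ * fderiv ℝ (q c ℓ) κ (Pi.single j' 1))
    (fun c => congrFun (hsum c) κ)
    (fun c => by
      have h2 : ∀ ℓ : Fin L, q c ℓ κ * ((q c ℓ κ)⁻¹ * fderiv ℝ (q c ℓ) κ (Pi.single j 1))
          = fderiv ℝ (q c ℓ) κ (Pi.single j 1) := fun ℓ =>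
        mul_inv_cancel_left₀ (hpos c ℓ κ).ne' _
      rw [Finset.sum_congr rfl fun ℓ _ => h2 ℓ]
      exact hD0' c _)
    (fun c => by
      have h2 : ∀ ℓ : Fin L, q c ℓ κ * ((q c ℓ κ)⁻¹ * fderiv ℝ (q c ℓ) κ (Pi.single j' 1))
          = fderiv ℝ (q c ℓ) κ (Pi.single j' 1) := fun ℓ =>
        mul_inv_cancel_left₀ (hpos c ℓ κ).ne' _
      rw [Finset.sum_congr rfl fun ℓ _ => h2 ℓ]
      exact hD0' c _)
  have hterm : ∀ ρ : C → Fin L,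
      (∏ c, q c (ρ c) κ) *
        (fderiv ℝ (fun κ' => Real.log (∏ c, q c (ρ c) κ')) κ (Pi.single j 1) *
         fderiv ℝ (fun κ' => Real.log (∏ c, q c (ρ c) κ')) κ (Pi.single j' 1))
      = (∏ c, q c (ρ c) κ) *
        ((∑ c, (q c (ρ c) κ)⁻¹ * fderiv ℝ (q c (ρ c)) κ (Pi.single j 1)) *
         (∑ c, (q c (ρ c) κ)⁻¹ * fderiv ℝ (q c (ρ c)) κ (Pi.single j' 1))) := by
    intro ρ
    rw [hlog ρ]
    congr 1
    rw [ContinuousLinearMap.sum_apply, ContinuousLinearMap.sum_apply]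
    congr 1 <;> exact Finset.sum_congr rfl fun c _ => by
      rw [ContinuousLinearMap.smul_apply, smul_eq_mul]
  rw [Finset.sum_congr rfl fun ρ _ => hterm ρ, key]
  refine Finset.sum_congr rfl fun c _ => Finset.sum_congr rfl fun ℓ _ => ?_
  have hq : q c ℓ κ ≠ 0 := (hpos c ℓ κ).ne'
  set Dj := fderiv ℝ (q c ℓ) κ (Pi.single j 1)
  set Dj' := fderiv ℝ (q c ℓ) κ (Pi.single j' 1)
  rw [show q c ℓ κ * ((q c ℓ κ)⁻¹ * Dj * ((q c ℓ κ)⁻¹ * Dj'))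
      = q c ℓ κ * (q c ℓ κ)⁻¹ * ((q c ℓ κ)⁻¹ * (Dj * Dj')) from by ring,
    mul_inv_cancel₀ hq, one_mul]


@[fun_prop] lemma diff_ofReal : Differentiable ℝ (fun x : ℝ => (x : ℂ)) :=
  Complex.ofRealCLM.differentiable

lemma diff_dot (n K : ℕ) (a : Fin n → ℂ) :
    Differentiable ℝ (fun κ : Fin (3 * K) → ℝ => dotH a (xstar n K κ)) := by
  unfold dotH xstar vAtom
  fun_prop

lemma diff_sFun (n K : ℕ) (a : Fin n → ℂ) : Differentiable ℝ (sFun n K a) :=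
  Complex.reCLM.differentiable.comp (diff_dot n K a)

lemma diff_rFun (n K : ℕ) (a : Fin n → ℂ) : Differentiable ℝ (rFun n K a) :=
  Complex.imCLM.differentiable.comp (diff_dot n K a)

def chEquiv (m L : ℕ) : (Fin m → Fin L × Fin L) ≃ ((Fin m × Bool) → Fin L) where
  toFun ρ := fun c => if c.2 then (ρ c.1).1 else (ρ c.1).2
  invFun τ := fun i => (τ (i, true), τ (i, false))
  left_inv ρ := by funext i; simp
  right_inv τ := by funext c; rcases c with ⟨i, b⟩; cases b <;> simp

end FisherAux

open FisherAux

/-- Theorem 1 of the paper: in the quantized spectral compressed sensing model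
with a general quantizer and `σ > 0`, the Fisher information matrix for estimating the
parameter vector `κ ∈ ℝ^{3K}` equals
`(1/(πσ²)) ∑ᵢ [Γᵢᴿ(κ) (∂sᵢ/∂κ)(∂sᵢ/∂κ)ᵀ + Γᵢᴵ(κ) (∂rᵢ/∂κ)(∂rᵢ/∂κ)ᵀ]`. -/
theorem fisher_information_general_quantizer
    (n m K L : ℕ) (hm : 0 < m) (hK : 0 < K) (hL : 0 < L)
    (σ : ℝ) (hσ : 0 < σ)
    (A : Fin m → Fin n → ℂ)
    (t : Fin (L + 1) → EReal) (ht : StrictMono t)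
    (ht0 : t 0 = ⊥) (htL : t (Fin.last L) = ⊤)
    (κ : Fin (3 * K) → ℝ) :
    FIM n m K L σ A t κ =
      (Real.pi * σ ^ 2)⁻¹ •
        ∑ i : Fin m,
          (Γq L σ t (sFun n K (A i) κ) •
              outerGrad (sFun n K (A i)) (sFun n K (A i)) κ +
            Γq L σ t (rFun n K (A i) κ) •
              outerGrad (rFun n K (A i)) (rFun n K (A i)) κ)     := by
  classical
  have htlt : ∀ ℓ : Fin L, t ℓ.castSucc < t ℓ.succ := fun ℓ => ht Fin.castSucc_lt_succ
  set μf : (Fin m × Bool) → (Fin (3 * K) → ℝ) → ℝ :=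
    fun c => if c.2 = true then sFun n K (A c.1) else rFun n K (A c.1) with hμf
  set q : (Fin m × Bool) → Fin L → (Fin (3 * K) → ℝ) → ℝ :=
    fun c ℓ κ' => Pc σ (t ℓ.castSucc) (t ℓ.succ) (μf c κ') with hq
  have hμd : ∀ c, Differentiable ℝ (μf c) := by
    rintro ⟨i, b⟩
    cases b
    · simpa [hμf] using diff_rFun n K (A i)
    · simpa [hμf] using diff_sFun n K (A i)
  have hqpos : ∀ c ℓ κ', 0 < q c ℓ κ' := by
    intro c ℓ κ'
    have h1 : q c ℓ κ' = cellProb σ (μf c κ') (t ℓ.castSucc) (t ℓ.succ) :=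
      (cellProb_eq_Pc hσ _ (htlt ℓ)).symm
    rw [h1]
    exact cellProb_pos hσ _ (htlt ℓ)
  have hqd : ∀ c ℓ, Differentiable ℝ (q c ℓ) := fun c ℓ κ' =>
    (hasFDerivAt_Pc_comp hσ _ _ (hμd c) κ').differentiableAt
  have hqsum : ∀ c, (fun κ' => ∑ ℓ, q c ℓ κ') = fun _ => (1 : ℝ) := fun c =>
    funext fun κ' => sum_Pc_one t ht0 htL (μf c κ')
  have hjoint : ∀ (ρ : Fin m → Fin L × Fin L) (κ' : Fin (3 * K) → ℝ),
      jointProb n m K L σ A t ρ κ' = ∏ c, q c (chEquiv m L ρ c) κ' := by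
    intro ρ κ'
    rw [Fintype.prod_prod_type]
    unfold jointProb
    refine Finset.prod_congr rfl fun i _ => ?_
    rw [Fintype.prod_bool]
    show _ = q (i, true) ((ρ i).1) κ' * q (i, false) ((ρ i).2) κ'
    rw [show q (i, true) ((ρ i).1) κ'
        = Pc σ (t (ρ i).1.castSucc) (t (ρ i).1.succ) (sFun n K (A i) κ') from rfl,
      show q (i, false) ((ρ i).2) κ'
        = Pc σ (t (ρ i).2.castSucc) (t (ρ i).2.succ) (rFun n K (A i) κ') from rfl,
      ← cellProb_eq_Pc hσ _ (htlt _), ← cellProb_eq_Pc hσ _ (htlt _)]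
  ext j j'
  simp only [FIM, Matrix.sum_apply, Matrix.smul_apply, smul_eq_mul, outerGrad,
    Matrix.of_apply]
  have hfun : ∀ ρ : Fin m → Fin L × Fin L,
      (fun κ' => Real.log (jointProb n m K L σ A t ρ κ'))
        = fun κ' => Real.log (∏ c, q c (chEquiv m L ρ c) κ') :=
    fun ρ => funext fun κ' => by rw [hjoint]
  have hre : (∑ ρ : Fin m → Fin L × Fin L, jointProb n m K L σ A t ρ κ *
        (fderiv ℝ (fun κ' => Real.log (jointProb n m K L σ A t ρ κ')) κ (Pi.single j 1) *
         fderiv ℝ (fun κ' => Real.log (jointProb n m K L σ A t ρ κ')) κ (Pi.single j' 1)))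
      = ∑ τ : (Fin m × Bool) → Fin L, (∏ c, q c (τ c) κ) *
        (fderiv ℝ (fun κ' => Real.log (∏ c, q c (τ c) κ')) κ (Pi.single j 1) *
         fderiv ℝ (fun κ' => Real.log (∏ c, q c (τ c) κ')) κ (Pi.single j' 1)) := by
    apply Fintype.sum_equiv (chEquiv m L)
    intro ρ
    rw [hjoint ρ κ, hfun ρ]
  rw [hre, fisher_core q κ hqpos hqd hqsum j j']
  have hDq : ∀ (c : Fin m × Bool) (ℓ : Fin L), fderiv ℝ (q c ℓ) κ =
      ((σ * Real.sqrt Real.pi)⁻¹ *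
        (Ge σ (μf c κ) (t ℓ.castSucc) - Ge σ (μf c κ) (t ℓ.succ))) • fderiv ℝ (μf c) κ :=
    fun c ℓ => (hasFDerivAt_Pc_comp hσ _ _ (hμd c) κ).fderiv
  have hterm2 : ∀ (c : Fin m × Bool) (ℓ : Fin L),
      (q c ℓ κ)⁻¹ * (fderiv ℝ (q c ℓ) κ (Pi.single j 1) * fderiv ℝ (q c ℓ) κ (Pi.single j' 1))
      = (Real.pi * σ ^ 2)⁻¹ *
          ((Ge σ (μf c κ) (t ℓ.succ) - Ge σ (μf c κ) (t ℓ.castSucc)) ^ 2 /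
            (Φe σ (μf c κ) (t ℓ.succ) - Φe σ (μf c κ) (t ℓ.castSucc))) *
          (fderiv ℝ (μf c) κ (Pi.single j 1) * fderiv ℝ (μf c) κ (Pi.single j' 1)) := by
    intro c ℓ
    have hqval : q c ℓ κ = Φe σ (μf c κ) (t ℓ.succ) - Φe σ (μf c κ) (t ℓ.castSucc) := rfl
    have hP : 0 < Φe σ (μf c κ) (t ℓ.succ) - Φe σ (μf c κ) (t ℓ.castSucc) := by
      have := hqpos c ℓ κ; rwa [hqval] at this
    rw [hDq c ℓ, hqval]
    simp only [ContinuousLinearMap.coe_smul', Pi.smul_apply, smul_eq_mul]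
    have hx : ((σ * Real.sqrt Real.pi)⁻¹ *
        (Ge σ (μf c κ) (t ℓ.castSucc) - Ge σ (μf c κ) (t ℓ.succ))) ^ 2
        = (Real.pi * σ ^ 2)⁻¹ *
          (Ge σ (μf c κ) (t ℓ.succ) - Ge σ (μf c κ) (t ℓ.castSucc)) ^ 2 := by
      rw [mul_pow, inv_pow, mul_pow, Real.sq_sqrt Real.pi_pos.le]
      ring
    set P := Φe σ (μf c κ) (t ℓ.succ) - Φe σ (μf c κ) (t ℓ.castSucc)
    set x := (σ * Real.sqrt Real.pi)⁻¹ *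
      (Ge σ (μf c κ) (t ℓ.castSucc) - Ge σ (μf c κ) (t ℓ.succ))
    set mj := fderiv ℝ (μf c) κ (Pi.single j 1)
    set mj' := fderiv ℝ (μf c) κ (Pi.single j' 1)
    rw [show P⁻¹ * (x * mj * (x * mj')) = x ^ 2 * P⁻¹ * (mj * mj') from by ring, hx]
    rw [div_eq_mul_inv]
    ring
  rw [Finset.sum_congr rfl fun c _ => Finset.sum_congr rfl fun ℓ _ => hterm2 c ℓ]
  have hsum2 : ∀ c : Fin m × Bool,
      (∑ ℓ : Fin L, (Real.pi * σ ^ 2)⁻¹ *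
          ((Ge σ (μf c κ) (t ℓ.succ) - Ge σ (μf c κ) (t ℓ.castSucc)) ^ 2 /
            (Φe σ (μf c κ) (t ℓ.succ) - Φe σ (μf c κ) (t ℓ.castSucc))) *
          (fderiv ℝ (μf c) κ (Pi.single j 1) * fderiv ℝ (μf c) κ (Pi.single j' 1)))
      = (Real.pi * σ ^ 2)⁻¹ * Γq L σ t (μf c κ) *
          (fderiv ℝ (μf c) κ (Pi.single j 1) * fderiv ℝ (μf c) κ (Pi.single j' 1)) := by
    intro c
    rw [← Finset.sum_mul, ← Finset.mul_sum]
    rfl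
  rw [Finset.sum_congr rfl fun c _ => hsum2 c, Fintype.sum_prod_type]
  have hbool : ∀ i : Fin m,
      (∑ b : Bool, (Real.pi * σ ^ 2)⁻¹ * Γq L σ t (μf (i, b) κ) *
        (fderiv ℝ (μf (i, b)) κ (Pi.single j 1) * fderiv ℝ (μf (i, b)) κ (Pi.single j' 1)))
      = (Real.pi * σ ^ 2)⁻¹ * Γq L σ t (sFun n K (A i) κ) *
          (fderiv ℝ (sFun n K (A i)) κ (Pi.single j 1) *
            fderiv ℝ (sFun n K (A i)) κ (Pi.single j' 1))
        + (Real.pi * σ ^ 2)⁻¹ * Γq L σ t (rFun n K (A i) κ) *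
          (fderiv ℝ (rFun n K (A i)) κ (Pi.single j 1) *
            fderiv ℝ (rFun n K (A i)) κ (Pi.single j' 1)) := by
    intro i
    rw [Fintype.sum_bool]
    rfl
  rw [Finset.sum_congr rfl fun i _ => hbool i]
  simp only [Matrix.smul_apply, Matrix.sum_apply, Matrix.add_apply, smul_eq_mul,
    outerGrad, Matrix.of_apply]
  rw [Finset.mul_sum]
  refine Finset.sum_congr rfl fun i _ => ?_
  ring


end
end

section
/- For every Q in C^{n x T}, the supremum of Re Tr(Q^H X) over all X in C^{n x T} with ||X||_A <= 1 equals the supremum over f in [0,1) of the Euclidean norm ||Q^H v(f)||_2. That is, the dual of the multiple-vector atomic norm satisfies ||Q||_A* = sup_{f in [0,1)} ||Q^H v(f)||_2. -/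
open scoped BigOperators Real
open Finset

noncomputable section

/-- The Euclidean (`ℓ₂`) norm on `ℂⁿ`. -/
def l2norm {n : ℕ} (x : Fin n → ℂ) : ℝ := Real.sqrt (∑ k, Complex.normSq (x k))

/-- The atomic norm `‖x‖_𝒜 = inf { ∑ₖ |αₖ| : x = ∑ₖ αₖ v(fₖ), fₖ ∈ [0,1) }`. -/
def atomicNorm {n : ℕ} (x : Fin n → ℂ) : ℝ :=
  sInf { r : ℝ | ∃ (N : ℕ) (α : Fin N → ℂ) (f : Fin N → ℝ),
    (∀ k, f k ∈ Set.Ico (0:ℝ) 1) ∧ x = ∑ k, α k • vAtom n (f k) ∧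
      r = ∑ k, ‖α k‖ }

/-- The dual atomic norm `‖q‖_𝒜^* = sup_{f ∈ [0,1)} |qᴴ v(f)|`. -/
def dualAtomicNorm {n : ℕ} (q : Fin n → ℂ) : ℝ :=
  ⨆ f : Set.Ico (0:ℝ) 1, ‖dotH q (vAtom n (f : ℝ))‖


/-- The multiple-vector atomic norm
`‖X‖_𝒜 = inf { ∑ₖ |cₖ| : X = ∑ₖ cₖ v(fₖ) bₖ, fₖ ∈ [0,1), ‖bₖ‖₂ = 1 }` on `ℂ^{n×T}`. -/
def mvAtomicNorm {n T : ℕ} (X : Matrix (Fin n) (Fin T) ℂ) : ℝ :=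
  sInf { r : ℝ | ∃ (N : ℕ) (c : Fin N → ℂ) (f : Fin N → ℝ) (b : Fin N → Fin T → ℂ),
    (∀ k, f k ∈ Set.Ico (0:ℝ) 1) ∧ (∀ k, l2norm (b k) = 1) ∧
      X = ∑ k, c k • Matrix.of (fun i t => vAtom n (f k) i * b k t) ∧
      r = ∑ k, ‖c k‖ }

lemma l2norm_nonneg {n : ℕ} (x : Fin n → ℂ) : 0 ≤ l2norm x := Real.sqrt_nonneg _

lemma l2norm_sq {n : ℕ} (x : Fin n → ℂ) : l2norm x ^ 2 = ∑ k, Complex.normSq (x k) := by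
  rw [l2norm, Real.sq_sqrt]
  exact Finset.sum_nonneg fun k _ => Complex.normSq_nonneg _

lemma cs {T : ℕ} (w b : Fin T → ℂ) :
    ‖∑ t, w t * b t‖ ≤ l2norm w * l2norm b := by
  calc ‖∑ t, w t * b t‖ ≤ ∑ t, ‖w t * b t‖ := by
        exact norm_sum_le _ _
    _ = ∑ t, ‖w t‖ * ‖b t‖ := by simp [norm_mul]
    _ ≤ l2norm w * l2norm b := by
        have h := Finset.sum_mul_sq_le_sq_mul_sq Finset.univ
          (fun t => ‖w t‖) (fun t => ‖b t‖)
        have h1 : (∑ t, ‖w t‖ * ‖b t‖)^2 ≤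
            (l2norm w * l2norm b)^2 := by
          rw [mul_pow, l2norm_sq, l2norm_sq]
          simpa [Complex.sq_norm] using h
        have h2 : 0 ≤ l2norm w * l2norm b := mul_nonneg (l2norm_nonneg _) (l2norm_nonneg _)
        nlinarith [Finset.sum_nonneg (fun t (_ : t ∈ Finset.univ) =>
          mul_nonneg (norm_nonneg (w t)) (norm_nonneg (b t)))]

lemma trace_atom {n T : ℕ} (Q : Matrix (Fin n) (Fin T) ℂ) (v : Fin n → ℂ) (b : Fin T → ℂ) :
    Matrix.trace (Q.conjTranspose * Matrix.of (fun i t => v i * b t)) =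
      ∑ t, (Matrix.mulVec Q.conjTranspose v) t * b t := by
  simp only [Matrix.trace, Matrix.diag, Matrix.mul_apply, Matrix.mulVec, dotProduct,
    Matrix.of_apply, Finset.sum_mul]
  congr 1; ext t; congr 1; ext i; ring

lemma abs_vAtom {n : ℕ} (f : ℝ) (i : Fin n) : ‖vAtom n f i‖ = 1 := by
  simp [vAtom, Complex.norm_exp]


lemma l2norm_smul {T : ℕ} (a : ℂ) (x : Fin T → ℂ) :
    l2norm (a • x) = ‖a‖ * l2norm x := by
  simp only [l2norm, Pi.smul_apply, smul_eq_mul, Complex.normSq_mul, ← Finset.mul_sum]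
  rw [Real.sqrt_mul (Complex.normSq_nonneg a), Complex.norm_def]

lemma l2norm_eq_zero_iff {T : ℕ} (x : Fin T → ℂ) : l2norm x = 0 ↔ x = 0 := by
  rw [l2norm, Real.sqrt_eq_zero (Finset.sum_nonneg fun k _ => Complex.normSq_nonneg _)]
  constructor
  · intro h
    ext t
    have := (Finset.sum_eq_zero_iff_of_nonneg (fun k _ => Complex.normSq_nonneg (x k))).1 h t
      (Finset.mem_univ t)
    simpa using Complex.normSq_eq_zero.1 this
  · intro h; simp [h]

lemma exp_inj_Ico {a b : ℝ} (ha : a ∈ Set.Ico (0:ℝ) 1) (hb : b ∈ Set.Ico (0:ℝ) 1)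
    (h : Complex.exp (2 * Real.pi * Complex.I * a) = Complex.exp (2 * Real.pi * Complex.I * b)) :
    a = b := by
  obtain ⟨m, hm⟩ := Complex.exp_eq_exp_iff_exists_int.1 h
  have h2 : (2 * Real.pi * Complex.I) ≠ 0 := by
    simp [Real.pi_ne_zero, Complex.I_ne_zero]
  have hm' : (2 * Real.pi * Complex.I) * a = (2 * Real.pi * Complex.I) * ((b : ℂ) + m) := by
    rw [hm]; ring
  have hab' : (a : ℂ) = (b : ℂ) + m := mul_left_cancel₀ h2 hm'
  have hab : a = b + m := by exact_mod_cast hab'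
  rcases ha with ⟨ha0, ha1⟩; rcases hb with ⟨hb0, hb1⟩
  have h1 : (m : ℝ) < 1 := by linarith
  have h2' : (-1 : ℝ) < m := by linarith
  have h1' : m < 1 := by exact_mod_cast h1
  have h2'' : (-1 : ℤ) < m := by exact_mod_cast h2'
  have hm0 : m = 0 := by omega
  rw [hm0] at hab; simpa using hab


def mvSet {n T : ℕ} (X : Matrix (Fin n) (Fin T) ℂ) : Set ℝ :=
  { r : ℝ | ∃ (N : ℕ) (c : Fin N → ℂ) (f : Fin N → ℝ) (b : Fin N → Fin T → ℂ),
    (∀ k, f k ∈ Set.Ico (0:ℝ) 1) ∧ (∀ k, l2norm (b k) = 1) ∧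
      X = ∑ k, c k • Matrix.of (fun i t => vAtom n (f k) i * b k t) ∧
      r = ∑ k, ‖c k‖ }

lemma zero_mem_mvSet_of_eq_zero {n T : ℕ} {X : Matrix (Fin n) (Fin T) ℂ} (hX : X = 0) :
    (0 : ℝ) ∈ mvSet X := by
  refine ⟨0, Fin.elim0, Fin.elim0, Fin.elim0, fun k => k.elim0, fun k => k.elim0, ?_, ?_⟩ <;>
    simp [hX]

lemma mvSet_nonneg {n T : ℕ} {X : Matrix (Fin n) (Fin T) ℂ} {r : ℝ} (hr : r ∈ mvSet X) :
    0 ≤ r := by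
  obtain ⟨N, c, f, b, _, _, _, hr⟩ := hr
  rw [hr]
  exact Finset.sum_nonneg fun k _ => norm_nonneg _

lemma mvSet_bddBelow {n T : ℕ} (X : Matrix (Fin n) (Fin T) ℂ) : BddBelow (mvSet X) :=
  ⟨0, fun _ hr => mvSet_nonneg hr⟩

lemma mvSet_nonempty {n T : ℕ} (X : Matrix (Fin n) (Fin T) ℂ) : (mvSet X).Nonempty := by
  rcases Nat.eq_zero_or_pos T with hT | hT
  · subst hT
    exact ⟨0, zero_mem_mvSet_of_eq_zero (by ext i t; exact t.elim0)⟩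
  rcases Nat.eq_zero_or_pos n with hn | hn
  · subst hn
    exact ⟨0, zero_mem_mvSet_of_eq_zero (by ext i t; exact i.elim0)⟩
  -- main case
  set f : Fin n → ℝ := fun k => (k : ℕ) / n with hf
  have hfIco : ∀ k, f k ∈ Set.Ico (0:ℝ) 1 := by
    intro k
    constructor
    · positivity
    · rw [div_lt_one (by exact_mod_cast hn)]
      exact_mod_cast k.isLt
  set z : Fin n → ℂ := fun k => Complex.exp (2 * Real.pi * Complex.I * (f k)) with hz
  have hzinj : Function.Injective z := by
    intro k l hkl
    have := exp_inj_Ico (hfIco k) (hfIco l) hkl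
    have : (k : ℕ) = (l : ℕ) := by
      simp only [hf] at this
      rw [div_left_inj' (Nat.cast_ne_zero.2 hn.ne')] at this
      exact_mod_cast this
    exact Fin.ext this
  set V : Matrix (Fin n) (Fin n) ℂ := Matrix.vandermonde z with hV
  have hdet : V.det ≠ 0 := by
    rw [hV, Matrix.det_vandermonde]
    refine Finset.prod_ne_zero_iff.2 fun i _ => Finset.prod_ne_zero_iff.2 fun j hj => ?_
    have hij : j ≠ i := (Finset.mem_Ioi.1 hj).ne'
    exact sub_ne_zero.2 fun h => hij (hzinj h)
  set B : Matrix (Fin n) (Fin T) ℂ := (V.transpose)⁻¹ * X with hB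
  have hVB : V.transpose * B = X := by
    rw [hB, ← Matrix.mul_assoc, Matrix.mul_nonsing_inv, Matrix.one_mul]
    rw [Matrix.det_transpose]
    exact isUnit_iff_ne_zero.2 hdet
  set t0 : Fin T := ⟨0, hT⟩ with ht0
  set b : Fin n → Fin T → ℂ := fun k =>
    if l2norm (B k) = 0 then (fun t => if t = t0 then 1 else 0)
    else ((l2norm (B k) : ℂ)⁻¹ • B k) with hb
  set c : Fin n → ℂ := fun k => (l2norm (B k) : ℂ) with hc
  have hbnorm : ∀ k, l2norm (b k) = 1 := by
    intro k
    rw [hb]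
    by_cases h : l2norm (B k) = 0
    · simp only [h, if_true]
      rw [l2norm]
      rw [show (∑ t, Complex.normSq (if t = t0 then (1:ℂ) else 0)) = 1 by
        simp [apply_ite Complex.normSq]]
      exact Real.sqrt_one
    · simp only [h, if_false]
      rw [l2norm_smul, norm_inv, Complex.norm_real,
        Real.norm_of_nonneg (l2norm_nonneg _), inv_mul_cancel₀ h]
  have hcb : ∀ k t, c k * b k t = B k t := by
    intro k t
    rw [hb, hc]
    by_cases h : l2norm (B k) = 0
    · have h0 : B k = 0 := (l2norm_eq_zero_iff _).1 h
      simp only [h, Complex.ofReal_zero, zero_mul, h0]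
      rw [show l2norm (0 : Fin T → ℂ) = 0 from (l2norm_eq_zero_iff _).2 rfl]
      simp
    · simp only [h, if_false, Pi.smul_apply, smul_eq_mul]
      rw [← mul_assoc, mul_inv_cancel₀ (Complex.ofReal_ne_zero.2 h), one_mul]
  have hXsum : X = ∑ k, c k • Matrix.of (fun i t => vAtom n (f k) i * b k t) := by
    ext i t
    rw [← hVB]
    simp only [Matrix.sum_apply, Matrix.smul_apply, Matrix.of_apply, smul_eq_mul,
      Matrix.mul_apply, Matrix.transpose_apply]
    refine Finset.sum_congr rfl fun k _ => ?_
    have hv : vAtom n (f k) i = z k ^ (i : ℕ) := by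
      rw [hz, vAtom, ← Complex.exp_nat_mul]
      ring_nf
    rw [hV, Matrix.vandermonde]
    simp only [Matrix.of_apply]
    rw [hv, ← hcb k t]
    ring
  exact ⟨∑ k, ‖c k‖, n, c, f, b, hfIco, hbnorm, hXsum, rfl⟩



lemma S_le {n T : ℕ} (Q : Matrix (Fin n) (Fin T) ℂ) (f : ℝ) :
    l2norm (Matrix.mulVec Q.conjTranspose (vAtom n f)) ≤
      Real.sqrt (∑ t, (∑ i, ‖Q i t‖)^2) := by
  rw [l2norm]
  apply Real.sqrt_le_sqrt
  apply Finset.sum_le_sum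
  intro t _
  rw [← Complex.sq_norm]
  have h1 : ‖Matrix.mulVec Q.conjTranspose (vAtom n f) t‖ ≤
      ∑ i, ‖Q i t‖ := by
    simp only [Matrix.mulVec, dotProduct]
    calc ‖∑ i, Q.conjTranspose t i * vAtom n f i‖
        ≤ ∑ i, ‖Q.conjTranspose t i * vAtom n f i‖ := norm_sum_le _ _
      _ = ∑ i, ‖Q i t‖ := by
          simp [abs_vAtom, Matrix.conjTranspose_apply, norm_mul]
  exact pow_le_pow_left₀ (norm_nonneg _) h1 2

lemma S_bdd {n T : ℕ} (Q : Matrix (Fin n) (Fin T) ℂ) :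
    BddAbove (Set.range fun f : Set.Ico (0:ℝ) 1 =>
      l2norm (Matrix.mulVec Q.conjTranspose (vAtom n (f : ℝ)))) := by
  refine ⟨Real.sqrt (∑ t, (∑ i, ‖Q i t‖)^2), ?_⟩
  rintro x ⟨f, rfl⟩
  exact S_le Q f

instance icoNonempty : Nonempty (Set.Ico (0:ℝ) 1) := ⟨⟨0, le_refl 0, zero_lt_one⟩⟩

lemma hM0 {n T : ℕ} (Q : Matrix (Fin n) (Fin T) ℂ) :
    0 ≤ ⨆ f : Set.Ico (0:ℝ) 1, l2norm (Matrix.mulVec Q.conjTranspose (vAtom n (f : ℝ))) :=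
  le_trans (l2norm_nonneg _) (le_ciSup (S_bdd Q) ⟨0, le_refl 0, zero_lt_one⟩)

lemma trace_le {n T : ℕ} (Q X : Matrix (Fin n) (Fin T) ℂ) (hX : mvAtomicNorm X ≤ 1) :
    (Matrix.trace (Q.conjTranspose * X)).re ≤
      ⨆ f : Set.Ico (0:ℝ) 1, l2norm (Matrix.mulVec Q.conjTranspose (vAtom n (f : ℝ))) := by
  set M := ⨆ f : Set.Ico (0:ℝ) 1, l2norm (Matrix.mulVec Q.conjTranspose (vAtom n (f : ℝ)))
    with hM
  have hM' : 0 ≤ M := hM0 Q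
  have key : ∀ r ∈ mvSet X, (Matrix.trace (Q.conjTranspose * X)).re ≤ r * M := by
    rintro r ⟨N, c, f, b, hfIco, hbnorm, hXsum, hr⟩
    have htr : Matrix.trace (Q.conjTranspose * X) =
        ∑ k, c k * ∑ t, (Matrix.mulVec Q.conjTranspose (vAtom n (f k))) t * b k t := by
      rw [hXsum, Matrix.mul_sum, Matrix.trace_sum]
      refine Finset.sum_congr rfl fun k _ => ?_
      rw [Matrix.mul_smul, Matrix.trace_smul, trace_atom, smul_eq_mul]
    rw [htr, hr]
    calc (∑ k, c k * ∑ t, (Matrix.mulVec Q.conjTranspose (vAtom n (f k))) t * b k t).re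
        ≤ ‖∑ k, c k * ∑ t,
            (Matrix.mulVec Q.conjTranspose (vAtom n (f k))) t * b k t‖ := Complex.re_le_norm _
      _ ≤ ∑ k, ‖c k * ∑ t,
            (Matrix.mulVec Q.conjTranspose (vAtom n (f k))) t * b k t‖ := norm_sum_le _ _
      _ ≤ ∑ k, ‖c k‖ * M := by
          refine Finset.sum_le_sum fun k _ => ?_
          rw [norm_mul]
          refine mul_le_mul_of_nonneg_left ?_ (norm_nonneg _)
          calc ‖∑ t, (Matrix.mulVec Q.conjTranspose (vAtom n (f k))) t * b k t‖
              ≤ l2norm (Matrix.mulVec Q.conjTranspose (vAtom n (f k))) * l2norm (b k) := cs _ _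
            _ = l2norm (Matrix.mulVec Q.conjTranspose (vAtom n (f k))) := by
                rw [hbnorm k, mul_one]
            _ ≤ M := le_ciSup (S_bdd Q) ⟨f k, hfIco k⟩
      _ = (∑ k, ‖c k‖) * M := by rw [Finset.sum_mul]
  have hinf : mvAtomicNorm X = sInf (mvSet X) := rfl
  rcases eq_or_lt_of_le hM' with hM0' | hMpos
  · obtain ⟨r, hrmem⟩ := mvSet_nonempty X
    have := key r hrmem
    rw [← hM0'] at this ⊢
    simpa using this
  · have h1 : (Matrix.trace (Q.conjTranspose * X)).re / M ≤ sInf (mvSet X) := by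
      refine le_csInf (mvSet_nonempty X) fun r hr => ?_
      rw [div_le_iff₀ hMpos]
      exact key r hr
    have h2 : (Matrix.trace (Q.conjTranspose * X)).re / M ≤ 1 := le_trans h1 (hinf ▸ hX)
    calc (Matrix.trace (Q.conjTranspose * X)).re
        = ((Matrix.trace (Q.conjTranspose * X)).re / M) * M := by field_simp
      _ ≤ 1 * M := mul_le_mul_of_nonneg_right h2 hM'
      _ = M := one_mul M



/-- for every `Q ∈ ℂ^{n×T}`, the supremum of `Re Tr(Qᴴ X)` over the
multiple-vector atomic norm unit ball equals `sup_{f ∈ [0,1)} ‖Qᴴ v(f)‖₂`. -/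
theorem mv_dualAtomicNorm_eq_sup (n T : ℕ) (Q : Matrix (Fin n) (Fin T) ℂ) :
    sSup ((fun X : Matrix (Fin n) (Fin T) ℂ => (Matrix.trace (Q.conjTranspose * X)).re) ''
        { X | mvAtomicNorm X ≤ 1 }) =
      ⨆ f : Set.Ico (0:ℝ) 1, l2norm (Matrix.mulVec Q.conjTranspose (vAtom n (f : ℝ))) := by
  set M := ⨆ f : Set.Ico (0:ℝ) 1, l2norm (Matrix.mulVec Q.conjTranspose (vAtom n (f : ℝ)))
    with hM
  set img := ((fun X : Matrix (Fin n) (Fin T) ℂ => (Matrix.trace (Q.conjTranspose * X)).re) ''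
        { X | mvAtomicNorm X ≤ 1 }) with himg
  have hzero_ball : mvAtomicNorm (0 : Matrix (Fin n) (Fin T) ℂ) ≤ 1 := by
    have h := csInf_le (mvSet_bddBelow (0 : Matrix (Fin n) (Fin T) ℂ))
      (zero_mem_mvSet_of_eq_zero rfl)
    exact le_trans h zero_le_one
  have h0mem : (0:ℝ) ∈ img := ⟨0, hzero_ball, by simp⟩
  have hImageBdd : BddAbove img := by
    refine ⟨M, ?_⟩
    rintro y ⟨X, hX, rfl⟩
    exact trace_le Q X hX
  apply le_antisymm
  · refine Real.sSup_le ?_ (hM0 Q)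
    rintro x ⟨X, hX, rfl⟩
    exact trace_le Q X hX
  · refine ciSup_le ?_
    rintro ⟨f, hf⟩
    set w := Matrix.mulVec Q.conjTranspose (vAtom n f) with hw
    by_cases hw0 : l2norm w = 0
    · rw [hw0]
      exact le_csSup hImageBdd h0mem
    · set bb : Fin T → ℂ := fun t => (l2norm w : ℂ)⁻¹ * (starRingEnd ℂ) (w t) with hbb
      set Xf : Matrix (Fin n) (Fin T) ℂ := Matrix.of (fun i t => vAtom n f i * bb t) with hXf
      have hbbnorm : l2norm bb = 1 := by
        have : bb = (l2norm w : ℂ)⁻¹ • (fun t => (starRingEnd ℂ) (w t)) := rfl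
        rw [this, l2norm_smul, norm_inv, Complex.norm_real, Real.norm_of_nonneg (l2norm_nonneg _)]
        have hconj : l2norm (fun t => (starRingEnd ℂ) (w t)) = l2norm w := by
          simp [l2norm, Complex.normSq_conj]
        rw [hconj, inv_mul_cancel₀ hw0]
      have hball : mvAtomicNorm Xf ≤ 1 := by
        have hmem : (1:ℝ) ∈ mvSet Xf := by
          refine ⟨1, fun _ => 1, fun _ => f, fun _ => bb, fun _ => hf, fun _ => hbbnorm, ?_, ?_⟩
          · simp [Fin.sum_univ_one, hXf]
          · simp
        exact le_trans (csInf_le (mvSet_bddBelow Xf) hmem) (le_refl 1)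
      have htr : (Matrix.trace (Q.conjTranspose * Xf)).re = l2norm w := by
        rw [hXf, trace_atom, ← hw]
        have : (∑ t, w t * bb t) = ((l2norm w)⁻¹ * (l2norm w)^2 : ℝ) := by
          rw [hbb]
          have : ∀ t, w t * ((l2norm w : ℂ)⁻¹ * (starRingEnd ℂ) (w t)) =
              (l2norm w : ℂ)⁻¹ * (Complex.normSq (w t) : ℝ) := by
            intro t
            rw [← Complex.mul_conj (w t)]
            ring
          rw [Finset.sum_congr rfl fun t _ => this t, ← Finset.mul_sum]
          have hsum : (∑ t, (Complex.normSq (w t) : ℂ)) = ((l2norm w ^ 2 : ℝ) : ℂ) := by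
            rw [l2norm_sq]; push_cast; rfl
          rw [hsum]
          push_cast
          ring
        rw [this]
        rw [Complex.ofReal_re]
        field_simp [pow_two]
      rw [← htr]
      exact le_csSup hImageBdd ⟨Xf, hball, rfl⟩

end
end

section
/- Let s in C^n, tau > 0, and let x_hat be a minimizer of (1/2)||x - s||_2^2 + tau*||x||_A over x in C^n. Let x* in C^n, lambda > 0, and set w = s - lambda*x* and e = lambda*x* - x_hat. If tau >= eta * ||w||_A* for some constant eta >= 1, then ||e||_A* <= (1 + 1/eta) * tau <= 2*tau. -/
open scoped BigOperators Real
open Finset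

noncomputable section

namespace DNEAux

lemma vAtom_abs (n : ℕ) (f : ℝ) (k : Fin n) : ‖vAtom n f k‖ = 1 := by
  have h : (2 * (Real.pi:ℂ) * Complex.I * f * (k:ℕ)) = ((2*Real.pi*f*(k:ℕ) : ℝ) : ℂ) * Complex.I := by
    push_cast; ring
  rw [vAtom, h, Complex.norm_exp]
  simp

lemma zinj (n : ℕ) (hn : 0 < n) : Function.Injective
    (fun k : Fin n => Complex.exp (2 * Real.pi * Complex.I * ((k:ℝ)/n))) := by
  intro a b hab
  simp only at hab
  rw [Complex.exp_eq_exp_iff_exists_int] at hab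
  obtain ⟨m, hm⟩ := hab
  have h2 : (2 * (Real.pi:ℂ) * Complex.I) ≠ 0 := by
    simp [Real.pi_ne_zero, Complex.I_ne_zero]
  push_cast at hm
  have hn0 : (n:ℂ) ≠ 0 := by exact_mod_cast hn.ne'
  have h3 : (a:ℂ)/n = (b:ℂ)/n + m := by
    apply mul_left_cancel₀ h2
    rw [hm]; ring
  have h4 : (a:ℂ) = (b:ℂ) + m*n := by
    field_simp at h3
    linear_combination h3
  have h5 : ((a:ℕ):ℤ) = ((b:ℕ):ℤ) + m*n := by exact_mod_cast h4
  have ha : ((a:ℕ):ℤ) < n := by exact_mod_cast a.isLt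
  have hb : ((b:ℕ):ℤ) < n := by exact_mod_cast b.isLt
  have ha0 : (0:ℤ) ≤ (a:ℕ) := Int.natCast_nonneg _
  have hb0 : (0:ℤ) ≤ (b:ℕ) := Int.natCast_nonneg _
  have hnz : (0:ℤ) < n := by exact_mod_cast hn
  have hm0 : m = 0 := by
    rcases lt_trichotomy m 0 with h | h | h
    · exfalso; nlinarith [Int.add_one_le_iff.mpr h]
    · exact h
    · exfalso; nlinarith [Int.add_one_le_iff.mpr h]
  rw [hm0] at h5
  simp at h5
  exact Fin.ext (by exact_mod_cast h5)

lemma decomp_exists (n : ℕ) (x : Fin n → ℂ) :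
    ∃ (N : ℕ) (α : Fin N → ℂ) (f : Fin N → ℝ),
      (∀ k, f k ∈ Set.Ico (0:ℝ) 1) ∧ x = ∑ k, α k • vAtom n (f k) := by
  rcases Nat.eq_zero_or_pos n with hn | hn
  · subst hn
    exact ⟨0, Fin.elim0, Fin.elim0, fun k => k.elim0, by funext k; exact k.elim0⟩
  set z : Fin n → ℂ := fun k => Complex.exp (2 * Real.pi * Complex.I * ((k:ℝ)/n)) with hz
  set V : Matrix (Fin n) (Fin n) ℂ := Matrix.vandermonde z with hV
  have hdet : V.det ≠ 0 := Matrix.det_vandermonde_ne_zero_iff.mpr (zinj n hn)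
  have hu : IsUnit V.det := isUnit_iff_ne_zero.mpr hdet
  set α := Matrix.vecMul x V⁻¹ with hα
  have hx : Matrix.vecMul α V = x := by
    rw [hα, Matrix.vecMul_vecMul, Matrix.nonsing_inv_mul _ hu, Matrix.vecMul_one]
  refine ⟨n, α, fun k => (k:ℝ)/n, ?_, ?_⟩
  · intro k
    constructor
    · positivity
    · rw [div_lt_one (by exact_mod_cast hn)]
      exact_mod_cast k.isLt
  · funext j
    have h1 := congrFun hx j
    rw [Matrix.vecMul, dotProduct] at h1
    rw [Finset.sum_apply]
    rw [← h1]
    apply Finset.sum_congr rfl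
    intro k _
    rw [Pi.smul_apply, smul_eq_mul]
    congr 1
    show V k j = vAtom n ((k:ℝ)/n) j
    rw [hV, Matrix.vandermonde]
    show z k ^ (j:ℕ) = _
    rw [hz]
    simp only
    rw [← Complex.exp_nat_mul, vAtom]
    congr 1
    push_cast
    ring

def atomSet (n : ℕ) (x : Fin n → ℂ) : Set ℝ :=
  { r : ℝ | ∃ (N : ℕ) (α : Fin N → ℂ) (f : Fin N → ℝ),
    (∀ k, f k ∈ Set.Ico (0:ℝ) 1) ∧ x = ∑ k, α k • vAtom n (f k) ∧
      r = ∑ k, ‖α k‖ }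

lemma atomicNorm_eq (n : ℕ) (x : Fin n → ℂ) : atomicNorm x = sInf (atomSet n x) := rfl

lemma atomSet_nonempty (n : ℕ) (x : Fin n → ℂ) : (atomSet n x).Nonempty := by
  obtain ⟨N, α, f, hf, hx⟩ := decomp_exists n x
  exact ⟨_, N, α, f, hf, hx, rfl⟩

lemma atomSet_bddBelow (n : ℕ) (x : Fin n → ℂ) : BddBelow (atomSet n x) := by
  refine ⟨0, fun r hr => ?_⟩
  obtain ⟨N, α, f, _, _, hr⟩ := hr
  rw [hr]
  positivity

lemma atomic_add_le (n : ℕ) (x : Fin n → ℂ) (c : ℂ) (f : ℝ) (hf : f ∈ Set.Ico (0:ℝ) 1) :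
    atomicNorm (x + c • vAtom n f) ≤ atomicNorm x + ‖c‖ := by
  rw [atomicNorm_eq, atomicNorm_eq]
  rw [← sub_le_iff_le_add]
  apply le_csInf (atomSet_nonempty n x)
  intro r hr
  rw [sub_le_iff_le_add]
  obtain ⟨N, α, g, hg, hx, hrr⟩ := hr
  apply csInf_le (atomSet_bddBelow _ _)
  refine ⟨N+1, Fin.cons c α, Fin.cons f g, ?_, ?_, ?_⟩
  · intro k
    refine Fin.cases ?_ ?_ k
    · simpa using hf
    · intro i; simpa using hg i
  · rw [Fin.sum_univ_succ]
    simp only [Fin.cons_succ, Fin.cons_zero]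
    rw [hx]; ring
  · rw [Fin.sum_univ_succ, hrr]
    simp only [Fin.cons_succ, Fin.cons_zero]
    ring

lemma l2sq {n : ℕ} (y : Fin n → ℂ) : l2norm y ^ 2 = ∑ k, Complex.normSq (y k) := by
  rw [l2norm, Real.sq_sqrt]
  exact Finset.sum_nonneg fun k _ => Complex.normSq_nonneg _

lemma key_bound (n : ℕ) (s : Fin n → ℂ) (τ : ℝ) (hτ : 0 < τ) (xh : Fin n → ℂ)
    (hmin : ∀ x : Fin n → ℂ,
        1 / 2 * l2norm (xh - s) ^ 2 + τ * atomicNorm xh ≤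
          1 / 2 * l2norm (x - s) ^ 2 + τ * atomicNorm x)
    (f : ℝ) (hf : f ∈ Set.Ico (0:ℝ) 1) :
    ‖dotH (s - xh) (vAtom n f)‖ ≤ τ := by
  set v : Fin n → ℂ := vAtom n f with hv
  set D : ℂ := dotH (s - xh) v with hD
  by_cases hD0 : D = 0
  · rw [hD0]; simpa using hτ.le
  have habs : 0 < ‖D‖ := norm_pos_iff.mpr hD0
  set c : ℂ := (starRingEnd ℂ) D / (‖D‖ : ℂ) with hc
  have hcabs : ‖c‖ = 1 := by
    rw [hc, norm_div, Complex.norm_conj, Complex.norm_real, Real.norm_eq_abs, abs_of_pos habs, div_self habs.ne']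
  have habsne : ((‖D‖ : ℝ) : ℂ) ≠ 0 := by
    exact_mod_cast habs.ne'
  have hcD : c * D = (‖D‖ : ℂ) := by
    rw [hc, div_mul_eq_mul_div, mul_comm, Complex.mul_conj, Complex.normSq_eq_norm_sq]
    rw [div_eq_iff habsne]
    push_cast
    ring
  have hdotneg : dotH (xh - s) v = -D := by
    rw [hD, dotH, dotH, ← Finset.sum_neg_distrib]
    apply Finset.sum_congr rfl
    intro k _
    have h0 : (xh - s) k = -((s - xh) k) := by simp
    rw [h0, map_neg]; ring
  have hconjsum : ∑ k, ((xh - s) k * (starRingEnd ℂ) (v k)) = (starRingEnd ℂ) (-D) := by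
    rw [← hdotneg, dotH, map_sum]
    apply Finset.sum_congr rfl
    intro k _
    rw [map_mul, Complex.conj_conj]
  have main : ∀ t : ℝ, 0 < t → ‖D‖ ≤ τ + t * n / 2 := by
    intro t ht
    set x : Fin n → ℂ := xh + ((t:ℂ) * c) • v with hx
    have hA : atomicNorm x ≤ atomicNorm xh + t := by
      have := atomic_add_le n xh ((t:ℂ)*c) f hf
      rw [← hv] at this
      rw [hx]
      calc atomicNorm (xh + ((t:ℂ)*c) • v) ≤ atomicNorm xh + ‖(t:ℂ)*c‖ := this
        _ = atomicNorm xh + t := by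
            rw [norm_mul, hcabs, Complex.norm_real, Real.norm_eq_abs, abs_of_pos ht, mul_one]
    have hL : l2norm (x - s) ^ 2 = l2norm (xh - s) ^ 2 + (n:ℝ) * t^2 - 2 * t * ‖D‖ := by
      rw [l2sq, l2sq]
      have hpt : ∀ k : Fin n, Complex.normSq ((x - s) k)
          = Complex.normSq ((xh - s) k) + t^2
            + 2 * (((xh - s) k * (starRingEnd ℂ) (((t:ℂ)*c) * v k)).re) := by
        intro k
        have h1 : (x - s) k = (xh - s) k + ((t:ℂ)*c) * v k := by
          simp [hx, Pi.sub_apply, Pi.add_apply, Pi.smul_apply]; ring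
        rw [h1, Complex.normSq_add]
        congr 2
        rw [Complex.normSq_mul, Complex.normSq_mul]
        have h2 : Complex.normSq (v k) = 1 := by
          rw [← Complex.sq_norm, hv, vAtom_abs]; norm_num
        have h3 : Complex.normSq c = 1 := by
          rw [← Complex.sq_norm, hcabs]; norm_num
        rw [h2, h3, Complex.normSq_ofReal]; ring
      rw [Finset.sum_congr rfl (fun k _ => hpt k)]
      rw [Finset.sum_add_distrib, Finset.sum_add_distrib, Finset.sum_const, ← Finset.mul_sum,
        ← Complex.re_sum]
      have h4 : ∑ k, ((xh - s) k * (starRingEnd ℂ) (((t:ℂ)*c) * v k))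
          = -((t:ℝ) : ℂ) * (‖D‖ : ℂ) := by
        have hterm : ∀ k : Fin n, (xh - s) k * (starRingEnd ℂ) (((t:ℂ)*c) * v k)
            = (starRingEnd ℂ) ((t:ℂ)*c) * ((xh - s) k * (starRingEnd ℂ) (v k)) := by
          intro k; rw [map_mul]; ring
        rw [Finset.sum_congr rfl (fun k _ => hterm k), ← Finset.mul_sum, hconjsum]
        have h5 : (starRingEnd ℂ) c * (starRingEnd ℂ) D = (‖D‖ : ℂ) := by
          rw [← map_mul, hcD, Complex.conj_ofReal]
        rw [map_mul, Complex.conj_ofReal, map_neg]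
        linear_combination (-(t:ℝ) : ℂ) * h5
      rw [h4]
      simp [Finset.card_univ]
      ring
    have hm := hmin x
    rw [hL] at hm
    nlinarith [hm, hA]
  by_contra hcon
  push_neg at hcon
  have hε : 0 < ‖D‖ - τ := by linarith
  have := main ((‖D‖ - τ) / (n + 1)) (by positivity)
  have hn1 : (0:ℝ) < n + 1 := by positivity
  set u : ℝ := (‖D‖ - τ) / (n + 1) with hu
  have hu0 : 0 < u := by positivity
  have huε : u * (n + 1) = ‖D‖ - τ := by
    rw [hu]; field_simp
  have hfrac : u * n / 2 < ‖D‖ - τ := by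
    nlinarith [hu0]
  linarith

lemma dotH_sub {n : ℕ} (a b v : Fin n → ℂ) : dotH (a - b) v = dotH a v - dotH b v := by
  rw [dotH, dotH, dotH, ← Finset.sum_sub_distrib]
  apply Finset.sum_congr rfl
  intro k _
  have h0 : (a - b) k = a k - b k := rfl
  rw [h0, map_sub]; ring

lemma dot_le {n : ℕ} (q : Fin n → ℂ) (f : ℝ) :
    ‖dotH q (vAtom n f)‖ ≤ ∑ k, ‖q k‖ := by
  rw [dotH]
  refine le_trans (norm_sum_le _ _) ?_
  apply Finset.sum_le_sum
  intro k _
  rw [norm_mul, Complex.norm_conj, vAtom_abs, mul_one]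

instance : Nonempty (Set.Ico (0:ℝ) 1) := ⟨⟨0, by norm_num⟩⟩

lemma dual_bddAbove {n : ℕ} (q : Fin n → ℂ) :
    BddAbove (Set.range fun f : Set.Ico (0:ℝ) 1 => ‖dotH q (vAtom n (f : ℝ))‖) := by
  refine ⟨∑ k, ‖q k‖, ?_⟩
  rintro r ⟨g, rfl⟩
  exact dot_le q g

lemma dual_le {n : ℕ} (q : Fin n → ℂ) (B : ℝ)
    (h : ∀ f : ℝ, f ∈ Set.Ico (0:ℝ) 1 → ‖dotH q (vAtom n f)‖ ≤ B) :
    dualAtomicNorm q ≤ B := by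
  rw [dualAtomicNorm]
  exact ciSup_le fun g => h g g.2

lemma le_dual {n : ℕ} (q : Fin n → ℂ) (f : ℝ) (hf : f ∈ Set.Ico (0:ℝ) 1) :
    ‖dotH q (vAtom n f)‖ ≤ dualAtomicNorm q := by
  rw [dualAtomicNorm]
  exact le_ciSup (dual_bddAbove q) ⟨f, hf⟩

end DNEAux

/-- let `x̂` minimize `(1/2)‖x - s‖₂² + τ‖x‖_𝒜` with `τ > 0`, let `x⋆ ∈ ℂⁿ`,
`λ > 0`, and set `w = s - λ x⋆`, `e = λ x⋆ - x̂`.  If `τ ≥ η ‖w‖_𝒜^*` for some constant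
`η ≥ 1`, then `‖e‖_𝒜^* ≤ (1 + 1/η) τ ≤ 2τ`. -/
theorem dual_norm_error_bound (n : ℕ) (s xs : Fin n → ℂ) (τ lam η : ℝ)
    (hτ : 0 < τ) (hlam : 0 < lam) (hη : 1 ≤ η)
    (xh : Fin n → ℂ)
    (hmin : ∀ x : Fin n → ℂ,
        1 / 2 * l2norm (xh - s) ^ 2 + τ * atomicNorm xh ≤
          1 / 2 * l2norm (x - s) ^ 2 + τ * atomicNorm x)
    (hτw : η * dualAtomicNorm (s - lam • xs) ≤ τ) :
    dualAtomicNorm (lam • xs - xh) ≤ (1 + 1 / η) * τ ∧ (1 + 1 / η) * τ ≤ 2 * τ := by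
  have hη0 : (0:ℝ) < η := lt_of_lt_of_le one_pos hη
  have hw : dualAtomicNorm (s - lam • xs) ≤ τ / η := by
    rw [le_div_iff₀ hη0]
    linarith [hτw]
  constructor
  · apply DNEAux.dual_le
    intro f hf
    have hsplit : (lam • xs - xh) = (s - xh) - (s - lam • xs) := by
      funext k; simp
    rw [hsplit, DNEAux.dotH_sub]
    calc ‖dotH (s - xh) (vAtom n f) - dotH (s - lam • xs) (vAtom n f)‖
        ≤ ‖dotH (s - xh) (vAtom n f)‖
            + ‖dotH (s - lam • xs) (vAtom n f)‖ := by
          have h := norm_add_le (dotH (s - xh) (vAtom n f))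
            (-(dotH (s - lam • xs) (vAtom n f)))
          simpa [sub_eq_add_neg] using h
      _ ≤ τ + τ / η := by
          gcongr
          · exact DNEAux.key_bound n s τ hτ xh hmin f hf
          · exact le_trans (DNEAux.le_dual _ f hf) hw
      _ = (1 + 1 / η) * τ := by ring
  · have h1 : 1 / η ≤ 1 := by
      rw [div_le_one hη0]; exact hη
    nlinarith [hτ]
end
end

section
/- Let x in C^n be fixed and sigma >= 0. Let a be a standard complex Gaussian vector in C^n, let eps be a standard complex Gaussian CN(0,1) independent of a, let theta be uniformly distributed on [0,1) independent of (a, eps), set z = <a, x> + sigma*eps and y = sign(Re z) + j sign(Im z). Then the random vector e^{j 2 pi theta} * y * a in C^n has the same distribution as sqrt(2) * a. -/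
open scoped BigOperators Real
open MeasureTheory ProbabilityTheory Finset

noncomputable section

/-- The law of a standard complex Gaussian `CN(0,1)`: independent real and imaginary parts,
each real Gaussian with mean `0` and variance `1/2`. -/
def stdCGauss : Measure ℂ :=
  ((gaussianReal 0 (1 / 2)).prod (gaussianReal 0 (1 / 2))).map
    Complex.measurableEquivRealProd.symm

/-- The law of a standard complex Gaussian vector in `ℂⁿ` (i.i.d. `CN(0,1)` entries). -/
def stdCGaussVec (n : ℕ) : Measure (Fin n → ℂ) := Measure.pi fun _ : Fin n => stdCGauss

/-- `sign(t) = +1` if `t > 0`, and `-1` otherwise. -/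
def sgn (t : ℝ) : ℝ := if 0 < t then 1 else -1

/-- The 1-bit (quadrant) quantization `sign(Re z) + j sign(Im z)` of `z ∈ ℂ`. -/
def ysign (z : ℂ) : ℂ := (sgn z.re : ℂ) + (sgn z.im : ℂ) * Complex.I

/-- `λ = 2‖x‖₂ / sqrt(π (σ² + ‖x‖₂²))`. -/
def lamq {n : ℕ} (x : Fin n → ℂ) (σ : ℝ) : ℝ :=
  2 * l2norm x / Real.sqrt (Real.pi * (σ ^ 2 + l2norm x ^ 2))

/-- The uniform distribution on `[0, 1)`. -/
def unif01 : Measure ℝ := volume.restrict (Set.Ico (0:ℝ) 1)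

/-! ### Auxiliary lemmas -/

lemma measurable_sgn : Measurable sgn := by
  unfold sgn
  exact Measurable.ite measurableSet_Ioi measurable_const measurable_const

lemma measurable_ysign : Measurable ysign := by
  unfold ysign
  exact ((Complex.measurable_ofReal.comp (measurable_sgn.comp Complex.measurable_re)).add
    ((Complex.measurable_ofReal.comp (measurable_sgn.comp Complex.measurable_im)).mul_const _))

instance : IsProbabilityMeasure stdCGauss := by
  unfold stdCGauss
  exact Measure.isProbabilityMeasure_map
    Complex.measurableEquivRealProd.symm.measurable.aemeasurable

instance (n : ℕ) : IsProbabilityMeasure (stdCGaussVec n) := by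
  unfold stdCGaussVec; infer_instance

instance : IsProbabilityMeasure unif01 :=
  ⟨by rw [unif01, Measure.restrict_apply_univ, Real.volume_Ico]; norm_num⟩

lemma unif01_exp_shift (s : ℝ) :
    Measure.map (fun θ : ℝ => Complex.exp (2 * Real.pi * Complex.I * ((θ + s : ℝ) : ℂ))) unif01 =
    Measure.map (fun θ : ℝ => Complex.exp (2 * Real.pi * Complex.I * (θ : ℂ))) unif01 := by
  haveI : Fact ((0:ℝ) < 1) := ⟨one_pos⟩
  have hq : MeasurePreserving ((↑) : ℝ → AddCircle (1:ℝ)) unif01 volume := by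
    have h0 : unif01 = volume.restrict (Set.Ioc (0:ℝ) 1) :=
      Measure.restrict_congr_set Ico_ae_eq_Ioc
    rw [h0]
    simpa using AddCircle.measurePreserving_mk (T := 1) 0
  set E : AddCircle (1:ℝ) → ℂ := fun q => ((AddCircle.toCircle q : Circle) : ℂ) with hEdef
  have hEc : Continuous E := continuous_subtype_val.comp AddCircle.continuous_toCircle
  have hkey : ∀ r : ℝ, E r = Complex.exp (2 * Real.pi * Complex.I * (r : ℂ)) := by
    intro r
    simp only [hEdef, AddCircle.toCircle_apply_mk, Circle.coe_exp]
    congr 1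
    push_cast
    ring
  have h1 : (fun θ : ℝ => Complex.exp (2 * Real.pi * Complex.I * ((θ + s : ℝ) : ℂ)))
      = E ∘ (fun q => ((s : AddCircle (1:ℝ))) + q) ∘ ((↑) : ℝ → AddCircle (1:ℝ)) := by
    funext θ
    simp only [Function.comp_apply]
    rw [show ((s : AddCircle (1:ℝ)) + (θ : AddCircle (1:ℝ))) = ((θ + s : ℝ) : AddCircle (1:ℝ)) by
      rw [add_comm]; rfl, hkey]
  have h2 : (fun θ : ℝ => Complex.exp (2 * Real.pi * Complex.I * (θ : ℂ)))
      = E ∘ ((↑) : ℝ → AddCircle (1:ℝ)) := by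
    funext θ; simp only [Function.comp_apply]; rw [hkey]
  have hma : Measurable (fun q : AddCircle (1:ℝ) => ((s : AddCircle (1:ℝ))) + q) :=
    measurable_const_add _
  rw [h1, h2, ← Function.comp_assoc,
    ← Measure.map_map (hEc.measurable.comp hma) hq.measurable,
    ← Measure.map_map hEc.measurable hma, hq.map_eq,
    ← Measure.map_map hEc.measurable hq.measurable, hq.map_eq,
    map_add_left_eq_self volume ((s : AddCircle (1:ℝ)))]

lemma pdf_mul (a b : ℝ) : gaussianPDFReal 0 (1/2) a * gaussianPDFReal 0 (1/2) b
    = Real.pi⁻¹ * Real.exp (-(a^2 + b^2)) := by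
  have hc : ((1/2 : NNReal) : ℝ) = 1/2 := by norm_num
  simp only [gaussianPDFReal, hc, sub_zero]
  have h2 : 2 * Real.pi * (1/2 : ℝ) = Real.pi := by ring
  rw [h2]
  have hs : Real.sqrt Real.pi * Real.sqrt Real.pi = Real.pi :=
    Real.mul_self_sqrt Real.pi_pos.le
  have he : Real.exp (-a^2 / (2 * (1/2:ℝ))) * Real.exp (-b^2 / (2 * (1/2:ℝ)))
      = Real.exp (-(a^2+b^2)) := by
    rw [← Real.exp_add]; congr 1; ring
  calc (Real.sqrt Real.pi)⁻¹ * Real.exp (-a^2 / (2 * (1/2:ℝ)))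
        * ((Real.sqrt Real.pi)⁻¹ * Real.exp (-b^2 / (2 * (1/2:ℝ))))
      = ((Real.sqrt Real.pi * Real.sqrt Real.pi))⁻¹ *
        (Real.exp (-a^2 / (2 * (1/2:ℝ))) * Real.exp (-b^2 / (2 * (1/2:ℝ)))) := by
        rw [mul_inv]; ring
    _ = Real.pi⁻¹ * Real.exp (-(a^2+b^2)) := by rw [hs, he]

lemma stdCGauss_withDensity :
    stdCGauss = (volume : Measure ℂ).withDensity
      (fun z => ENNReal.ofReal (Real.pi⁻¹ * Real.exp (-Complex.normSq z))) := by
  have hv : ((1:NNReal) / 2) ≠ 0 := by norm_num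
  have hprod : (gaussianReal 0 (1/2)).prod (gaussianReal 0 (1/2)) =
      ((volume : Measure ℝ).prod volume).withDensity
        (fun p => gaussianPDF 0 (1/2) p.1 * gaussianPDF 0 (1/2) p.2) := by
    refine Measure.prod_eq fun s t hs ht => ?_
    rw [withDensity_apply _ (hs.prod ht), ← Measure.prod_restrict,
        lintegral_prod_mul ((measurable_gaussianPDF 0 (1/2)).aemeasurable)
          ((measurable_gaussianPDF 0 (1/2)).aemeasurable),
        ← gaussianReal_apply _ hv s, ← gaussianReal_apply _ hv t]
  unfold stdCGauss
  rw [hprod]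
  ext s hs
  have hmeas := Complex.measurableEquivRealProd.symm.measurable
  rw [Measure.map_apply hmeas hs, withDensity_apply _ (hmeas hs), withDensity_apply _ hs]
  have hMP : MeasurePreserving (Complex.measurableEquivRealProd.symm)
      ((volume : Measure ℝ).prod volume) (volume : Measure ℂ) :=
    Complex.volume_preserving_equiv_real_prod.symm
  have hpoint : ∀ p : ℝ × ℝ, gaussianPDF 0 (1/2) p.1 * gaussianPDF 0 (1/2) p.2
      = ENNReal.ofReal (Real.pi⁻¹ *
          Real.exp (-Complex.normSq (Complex.measurableEquivRealProd.symm p))) := by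
    intro p
    rw [gaussianPDF, gaussianPDF, ← ENNReal.ofReal_mul (gaussianPDFReal_nonneg _ _ _), pdf_mul]
    congr 2
    rw [Complex.measurableEquivRealProd_symm_apply]
    simp [Complex.normSq_mk]
    ring
  calc ∫⁻ p in Complex.measurableEquivRealProd.symm ⁻¹' s,
        gaussianPDF 0 (1/2) p.1 * gaussianPDF 0 (1/2) p.2 ∂((volume : Measure ℝ).prod volume)
      = ∫⁻ p in Complex.measurableEquivRealProd.symm ⁻¹' s,
        (fun z => ENNReal.ofReal (Real.pi⁻¹ * Real.exp (-Complex.normSq z)))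
          (Complex.measurableEquivRealProd.symm p) ∂((volume : Measure ℝ).prod volume) := by
        exact lintegral_congr fun p => hpoint p
    _ = ∫⁻ z in s, ENNReal.ofReal (Real.pi⁻¹ * Real.exp (-Complex.normSq z)) ∂(volume : Measure ℂ) :=
        by simpa using hMP.setLIntegral_comp_preimage_emb Complex.measurableEquivRealProd.symm.measurableEmbedding (fun z => ENNReal.ofReal (Real.pi⁻¹ * Real.exp (-Complex.normSq z))) s

lemma stdCGauss_rot (u : Circle) :
    Measure.map (fun z : ℂ => (u : ℂ) * z) stdCGauss = stdCGauss := by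
  have hR : MeasurePreserving (rotation u) (volume : Measure ℂ) volume :=
    (rotation u).measurePreserving
  have hemb : MeasurableEmbedding (rotation u : ℂ → ℂ) :=
    (rotation u).toHomeomorph.measurableEmbedding
  have hfun : (fun z : ℂ => (u : ℂ) * z) = (rotation u : ℂ → ℂ) := by
    funext z; rw [rotation_apply]
  rw [hfun, stdCGauss_withDensity]
  ext s hs
  rw [Measure.map_apply hR.measurable hs, withDensity_apply _ (hR.measurable hs),
      withDensity_apply _ hs]
  calc ∫⁻ z in (rotation u : ℂ → ℂ) ⁻¹' s,
        ENNReal.ofReal (Real.pi⁻¹ * Real.exp (-Complex.normSq z)) ∂(volume : Measure ℂ)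
      = ∫⁻ z in (rotation u : ℂ → ℂ) ⁻¹' s,
        (fun w => ENNReal.ofReal (Real.pi⁻¹ * Real.exp (-Complex.normSq w)))
          (rotation u z) ∂(volume : Measure ℂ) := by
        refine lintegral_congr fun z => ?_
        simp only [rotation_apply, Complex.normSq_mul, Circle.normSq_coe, one_mul]
    _ = ∫⁻ w in s, ENNReal.ofReal (Real.pi⁻¹ * Real.exp (-Complex.normSq w)) ∂(volume : Measure ℂ) :=
        by simpa using hR.setLIntegral_comp_preimage_emb hemb (fun w => ENNReal.ofReal (Real.pi⁻¹ * Real.exp (-Complex.normSq w))) s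

lemma stdCGaussVec_rot (n : ℕ) (u : Circle) :
    Measure.map (fun v : Fin n → ℂ => fun k => (u : ℂ) * v k) (stdCGaussVec n)
      = stdCGaussVec n := by
  unfold stdCGaussVec
  exact (measurePreserving_pi _ _
    (fun _ : Fin n => ⟨measurable_const_mul _, stdCGauss_rot u⟩)).map_eq

lemma exp_two_pi_I (s : ℝ) : Complex.exp (2 * Real.pi * Complex.I * (s : ℂ))
    = ((Real.cos (2 * Real.pi * s) : ℝ) : ℂ)
      + ((Real.sin (2 * Real.pi * s) : ℝ) : ℂ) * Complex.I := by
  rw [show (2 * (Real.pi:ℂ) * Complex.I * (s:ℂ)) = ((2 * Real.pi * s : ℝ) : ℂ) * Complex.I by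
    push_cast; ring, Complex.exp_mul_I, ← Complex.ofReal_cos, ← Complex.ofReal_sin]

lemma ysign_decomp (z : ℂ) : ∃ s : ℝ,
    ysign z = (Real.sqrt 2 : ℂ) * Complex.exp (2 * Real.pi * Complex.I * (s : ℂ)) := by
  have h22 : Real.sqrt 2 * Real.sqrt 2 = 2 := Real.mul_self_sqrt (by norm_num)
  have h2c : (Real.sqrt 2 : ℂ) * (Real.sqrt 2 : ℂ) = 2 := by
    rw [show (Real.sqrt 2 : ℂ) * (Real.sqrt 2 : ℂ) = ((Real.sqrt 2 * Real.sqrt 2 : ℝ) : ℂ) by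
      push_cast; ring, h22]
    norm_num
  have hpp : Real.cos (Real.pi + Real.pi/4) = -(Real.sqrt 2/2) := by
    rw [Real.cos_add, Real.cos_pi, Real.sin_pi, Real.cos_pi_div_four]; ring
  have hps : Real.sin (Real.pi + Real.pi/4) = -(Real.sqrt 2/2) := by
    rw [Real.sin_add, Real.cos_pi, Real.sin_pi, Real.sin_pi_div_four]; ring
  unfold ysign sgn
  by_cases h1 : 0 < z.re <;> by_cases h2 : 0 < z.im <;>
    simp only [h1, h2, if_pos, if_neg, if_false, if_true]
  · exact ⟨1/8, by
      rw [exp_two_pi_I, show 2 * Real.pi * (1/8 : ℝ) = Real.pi / 4 by ring,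
        Real.cos_pi_div_four, Real.sin_pi_div_four]
      push_cast
      linear_combination (-(1 + Complex.I)/2) * h2c⟩
  · exact ⟨-1/8, by
      rw [exp_two_pi_I, show 2 * Real.pi * (-1/8 : ℝ) = -(Real.pi / 4) by ring,
        Real.cos_neg, Real.sin_neg, Real.cos_pi_div_four, Real.sin_pi_div_four]
      push_cast
      linear_combination (-(1 - Complex.I)/2) * h2c⟩
  · exact ⟨3/8, by
      rw [exp_two_pi_I, show 2 * Real.pi * (3/8 : ℝ) = Real.pi - Real.pi / 4 by ring,
        Real.cos_pi_sub, Real.sin_pi_sub, Real.cos_pi_div_four, Real.sin_pi_div_four]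
      push_cast
      linear_combination ((1 - Complex.I)/2) * h2c⟩
  · exact ⟨5/8, by
      rw [exp_two_pi_I, show 2 * Real.pi * (5/8 : ℝ) = Real.pi + Real.pi / 4 by ring, hpp, hps]
      push_cast
      linear_combination ((1 + Complex.I)/2) * h2c⟩

lemma map_prod_eq_of_fiber {α β γ : Type*} [MeasurableSpace α] [MeasurableSpace β]
    [MeasurableSpace γ] (μ : Measure α) (ν : Measure β) [SFinite ν] {F G : α × β → γ}
    (hF : Measurable F) (hG : Measurable G)
    (h : ∀ x, Measure.map (fun y => F (x, y)) ν = Measure.map (fun y => G (x, y)) ν) :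
    Measure.map F (μ.prod ν) = Measure.map G (μ.prod ν) := by
  ext s hs
  rw [Measure.map_apply hF hs, Measure.map_apply hG hs,
      Measure.prod_apply (hF hs), Measure.prod_apply (hG hs)]
  refine lintegral_congr fun x => ?_
  have hmF : Measurable (fun y => F (x, y)) := hF.comp measurable_prodMk_left
  have hmG : Measurable (fun y => G (x, y)) := hG.comp measurable_prodMk_left
  have hx1 : ν (Prod.mk x ⁻¹' (F ⁻¹' s)) = Measure.map (fun y => F (x, y)) ν s := by
    rw [Measure.map_apply hmF hs]; rfl
  have hx2 : ν (Prod.mk x ⁻¹' (G ⁻¹' s)) = Measure.map (fun y => G (x, y)) ν s := by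
    rw [Measure.map_apply hmG hs]; rfl
  rw [hx1, hx2, h x]

lemma map_prod_eq_const {α β γ : Type*} [MeasurableSpace α] [MeasurableSpace β]
    [MeasurableSpace γ] (μ : Measure α) [IsProbabilityMeasure μ] (ν : Measure β) [SFinite ν]
    {F : α × β → γ} (hF : Measurable F) (ρ : Measure γ)
    (h : ∀ x, Measure.map (fun y => F (x, y)) ν = ρ) :
    Measure.map F (μ.prod ν) = ρ := by
  ext s hs
  rw [Measure.map_apply hF hs, Measure.prod_apply (hF hs)]
  have hx : ∀ x, ν (Prod.mk x ⁻¹' (F ⁻¹' s)) = ρ s := fun x => by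
    have hmF : Measurable (fun y => F (x, y)) := hF.comp measurable_prodMk_left
    rw [← h x, Measure.map_apply hmF hs]; rfl
  simp only [hx]
  rw [lintegral_const, measure_univ, mul_one]

/-- let `x ∈ ℂⁿ` be fixed and `σ ≥ 0`.  Let `a` be a standard complex Gaussian
vector, `ε ~ CN(0,1)`, `θ` uniform on `[0,1)`, all independent; set `z = ⟨a,x⟩ + σε` and
`y = sign(Re z) + j sign(Im z)`.  Then `e^{j2πθ} y a` has the same distribution as `√2 a`. -/
theorem symmetrized_distribution
    {Ω : Type} [MeasurableSpace Ω] (P : Measure Ω) [IsProbabilityMeasure P]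
    (n : ℕ) (x : Fin n → ℂ) (σ : ℝ) (hσ : 0 ≤ σ)
    (a : Ω → Fin n → ℂ) (ε : Ω → ℂ) (θ : Ω → ℝ)
    (hlaw : Measure.map (fun ω => (a ω, ε ω, θ ω)) P =
      (stdCGaussVec n).prod (stdCGauss.prod unif01)) :
    Measure.map (fun ω =>
        (Complex.exp (2 * Real.pi * Complex.I * θ ω) *
          ysign (dotH (a ω) x + (σ : ℂ) * ε ω)) • a ω) P =
      Measure.map (fun ω => (Real.sqrt 2 : ℝ) • a ω) P := by
  -- basic measurability facts
  have hdot : Measurable (fun v : Fin n → ℂ => dotH v x) := by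
    simp only [dotH, starRingEnd_apply]
    exact Finset.measurable_sum _ fun k _ => (Measurable.mul_const (by exact continuous_star.measurable.comp (measurable_pi_apply k)) (x k))
  have hexpθ : Measurable fun t : ℝ => Complex.exp (2 * Real.pi * Complex.I * (t : ℂ)) :=
    Complex.continuous_exp.measurable.comp
      (Complex.measurable_ofReal.const_mul (2 * Real.pi * Complex.I))
  have hsqrt : Measurable (fun v : Fin n → ℂ => (Real.sqrt 2 : ℝ) • v) :=
    measurable_pi_lambda _ fun k => (measurable_pi_apply k).const_smul _
  have hc1 : Measurable fun p : (Fin n → ℂ) × ℂ × ℝ =>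
      Complex.exp (2 * Real.pi * Complex.I * (p.2.2 : ℂ)) *
        ysign (dotH p.1 x + (σ:ℂ) * p.2.1) :=
    (hexpθ.comp (measurable_snd.comp measurable_snd)).mul
      (measurable_ysign.comp ((hdot.comp measurable_fst).add
        ((measurable_fst.comp measurable_snd).const_mul (σ:ℂ))))
  have hφ : Measurable (fun p : (Fin n → ℂ) × ℂ × ℝ =>
      (Complex.exp (2 * Real.pi * Complex.I * (p.2.2 : ℂ)) *
        ysign (dotH p.1 x + (σ:ℂ) * p.2.1)) • p.1) :=
    measurable_pi_lambda _ fun k => hc1.mul ((measurable_pi_apply k).comp measurable_fst)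
  have hψ : Measurable (fun p : (Fin n → ℂ) × ℂ × ℝ => (Real.sqrt 2 : ℝ) • p.1) :=
    hsqrt.comp measurable_fst
  have hcF : Measurable fun q : ((Fin n → ℂ) × ℂ) × ℝ =>
      Complex.exp (2 * Real.pi * Complex.I * (q.2 : ℂ)) *
        ysign (dotH q.1.1 x + (σ:ℂ) * q.1.2) :=
    (hexpθ.comp measurable_snd).mul
      (measurable_ysign.comp ((hdot.comp (measurable_fst.comp measurable_fst)).add
        ((measurable_snd.comp measurable_fst).const_mul (σ:ℂ))))
  have hF : Measurable (fun q : ((Fin n → ℂ) × ℂ) × ℝ =>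
      (Complex.exp (2 * Real.pi * Complex.I * (q.2 : ℂ)) *
        ysign (dotH q.1.1 x + (σ:ℂ) * q.1.2)) • q.1.1) :=
    measurable_pi_lambda _ fun k =>
      hcF.mul ((measurable_pi_apply k).comp (measurable_fst.comp measurable_fst))
  have hH : Measurable (fun q : ((Fin n → ℂ) × ℂ) × ℝ =>
      ((Real.sqrt 2 : ℂ) * Complex.exp (2 * Real.pi * Complex.I * (q.2 : ℂ))) • q.1.1) :=
    measurable_pi_lambda _ fun k =>
      (((hexpθ.comp measurable_snd).const_mul _).mul
        ((measurable_pi_apply k).comp (measurable_fst.comp measurable_fst)))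
  -- the triple is a.e. measurable
  have hT : AEMeasurable (fun ω => (a ω, ε ω, θ ω)) P := by
    by_contra h
    rw [Measure.map_of_not_aemeasurable h] at hlaw
    have h1 : ((stdCGaussVec n).prod (stdCGauss.prod unif01)) Set.univ = 0 := by
      rw [← hlaw]; rfl
    rw [measure_univ] at h1
    exact one_ne_zero h1
  -- rewrite both sides as pushforwards of the product law
  have hL : Measure.map (fun ω =>
      (Complex.exp (2 * Real.pi * Complex.I * θ ω) *
        ysign (dotH (a ω) x + (σ : ℂ) * ε ω)) • a ω) P
      = Measure.map (fun p : (Fin n → ℂ) × ℂ × ℝ =>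
          (Complex.exp (2 * Real.pi * Complex.I * (p.2.2 : ℂ)) *
            ysign (dotH p.1 x + (σ:ℂ) * p.2.1)) • p.1)
          ((stdCGaussVec n).prod (stdCGauss.prod unif01)) := by
    have h := AEMeasurable.map_map_of_aemeasurable hφ.aemeasurable hT
    rw [hlaw] at h
    exact h.symm
  have hR : Measure.map (fun ω => (Real.sqrt 2 : ℝ) • a ω) P
      = Measure.map (fun p : (Fin n → ℂ) × ℂ × ℝ => (Real.sqrt 2 : ℝ) • p.1)
          ((stdCGaussVec n).prod (stdCGauss.prod unif01)) := by
    have h := AEMeasurable.map_map_of_aemeasurable hψ.aemeasurable hT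
    rw [hlaw] at h
    exact h.symm
  rw [hL, hR]
  -- target measure
  set ρ : Measure (Fin n → ℂ) :=
    Measure.map (fun v : Fin n → ℂ => (Real.sqrt 2 : ℝ) • v) (stdCGaussVec n) with hρdef
  -- step 1: conditional on everything else, the θ-average symmetrizes the phase
  have step1 : Measure.map (fun q : ((Fin n → ℂ) × ℂ) × ℝ =>
        (Complex.exp (2 * Real.pi * Complex.I * (q.2 : ℂ)) *
          ysign (dotH q.1.1 x + (σ:ℂ) * q.1.2)) • q.1.1)
        (((stdCGaussVec n).prod stdCGauss).prod unif01)
      = Measure.map (fun q : ((Fin n → ℂ) × ℂ) × ℝ =>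
        ((Real.sqrt 2 : ℂ) * Complex.exp (2 * Real.pi * Complex.I * (q.2 : ℂ))) • q.1.1)
        (((stdCGaussVec n).prod stdCGauss).prod unif01) := by
    refine map_prod_eq_of_fiber _ _ hF hH fun p => ?_
    obtain ⟨s, hy⟩ := ysign_decomp (dotH p.1 x + (σ:ℂ) * p.2)
    have hw : Measurable fun w : ℂ => ((Real.sqrt 2 : ℂ) * w) • p.1 :=
      measurable_pi_lambda _ fun k => ((measurable_id.const_mul _).mul_const (p.1 k))
    have hexps : Measurable fun t : ℝ =>
        Complex.exp (2 * Real.pi * Complex.I * ((t + s : ℝ) : ℂ)) :=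
      hexpθ.comp (measurable_id.add_const s)
    have hfun1 : (fun t : ℝ =>
        (Complex.exp (2 * Real.pi * Complex.I * ((t : ℝ) : ℂ)) *
          ysign (dotH p.1 x + (σ:ℂ) * p.2)) • p.1)
        = (fun w : ℂ => ((Real.sqrt 2 : ℂ) * w) • p.1) ∘
            (fun t : ℝ => Complex.exp (2 * Real.pi * Complex.I * ((t + s : ℝ) : ℂ))) := by
      funext t
      simp only [Function.comp_apply]
      rw [hy]
      congr 1
      rw [show ((t + s : ℝ) : ℂ) = (t:ℂ) + (s:ℂ) from by push_cast; ring, mul_add,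
        Complex.exp_add]
      ring
    have hfun2 : (fun t : ℝ =>
        ((Real.sqrt 2 : ℂ) * Complex.exp (2 * Real.pi * Complex.I * ((t : ℝ) : ℂ))) • p.1)
        = (fun w : ℂ => ((Real.sqrt 2 : ℂ) * w) • p.1) ∘
            (fun t : ℝ => Complex.exp (2 * Real.pi * Complex.I * ((t : ℝ) : ℂ))) := rfl
    show Measure.map (fun t : ℝ =>
        (Complex.exp (2 * Real.pi * Complex.I * ((t : ℝ) : ℂ)) *
          ysign (dotH p.1 x + (σ:ℂ) * p.2)) • p.1) unif01
      = Measure.map (fun t : ℝ =>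
        ((Real.sqrt 2 : ℂ) * Complex.exp (2 * Real.pi * Complex.I * ((t : ℝ) : ℂ))) • p.1) unif01
    rw [hfun1, hfun2, ← Measure.map_map hw hexps, ← Measure.map_map hw hexpθ,
      unif01_exp_shift s]
  -- step 2: for fixed θ, rotation invariance of the Gaussian vector
  have step2 : Measure.map (fun q : ((Fin n → ℂ) × ℂ) × ℝ =>
        ((Real.sqrt 2 : ℂ) * Complex.exp (2 * Real.pi * Complex.I * (q.2 : ℂ))) • q.1.1)
        (((stdCGaussVec n).prod stdCGauss).prod unif01) = ρ := by
    have hsw : ((stdCGaussVec n).prod stdCGauss).prod unif01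
        = Measure.map Prod.swap (unif01.prod ((stdCGaussVec n).prod stdCGauss)) :=
      Measure.prod_swap.symm
    rw [hsw, Measure.map_map hH measurable_swap]
    refine map_prod_eq_const _ _ (hH.comp measurable_swap) _ fun t => ?_
    have hu : ((Circle.exp (2 * Real.pi * t) : Circle) : ℂ)
        = Complex.exp (2 * Real.pi * Complex.I * (t : ℂ)) := by
      rw [Circle.coe_exp]; congr 1; push_cast; ring
    have hsm : Measurable (fun v : Fin n → ℂ =>
        ((Real.sqrt 2 : ℂ) * Complex.exp (2 * Real.pi * Complex.I * (t : ℂ))) • v) :=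
      measurable_pi_lambda _ fun k => (measurable_pi_apply k).const_mul _
    have hrot : Measurable (fun v : Fin n → ℂ =>
        fun k => ((Circle.exp (2 * Real.pi * t) : Circle) : ℂ) * v k) :=
      measurable_pi_lambda _ fun k => (measurable_pi_apply k).const_mul _
    have hcomp : (fun y : (Fin n → ℂ) × ℂ =>
        ((fun q : ((Fin n → ℂ) × ℂ) × ℝ =>
          ((Real.sqrt 2 : ℂ) * Complex.exp (2 * Real.pi * Complex.I * (q.2 : ℂ))) • q.1.1)
          ∘ Prod.swap) (t, y))
        = (fun v : Fin n → ℂ =>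
            ((Real.sqrt 2 : ℂ) * Complex.exp (2 * Real.pi * Complex.I * (t : ℂ))) • v)
          ∘ Prod.fst := rfl
    rw [hcomp, ← Measure.map_map hsm measurable_fst, Measure.map_fst_prod, measure_univ,
      one_smul]
    have hdc : (fun v : Fin n → ℂ =>
        ((Real.sqrt 2 : ℂ) * Complex.exp (2 * Real.pi * Complex.I * (t : ℂ))) • v)
        = (fun v : Fin n → ℂ => (Real.sqrt 2 : ℝ) • v) ∘
          (fun v : Fin n → ℂ => fun k => ((Circle.exp (2 * Real.pi * t) : Circle) : ℂ) * v k) := by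
      funext v
      funext k
      simp only [Function.comp_apply, Pi.smul_apply, smul_eq_mul, hu, Complex.real_smul]
      ring
    rw [hdc, ← Measure.map_map hsqrt hrot, stdCGaussVec_rot n (Circle.exp (2 * Real.pi * t)),
      hρdef]
  -- step 3: the right-hand side is the same measure
  have step3 : Measure.map (fun p : (Fin n → ℂ) × ℂ × ℝ => (Real.sqrt 2 : ℝ) • p.1)
      ((stdCGaussVec n).prod (stdCGauss.prod unif01)) = ρ := by
    have hcomp : (fun p : (Fin n → ℂ) × ℂ × ℝ => (Real.sqrt 2 : ℝ) • p.1)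
        = (fun v : Fin n → ℂ => (Real.sqrt 2 : ℝ) • v) ∘ Prod.fst := rfl
    rw [hcomp, ← Measure.map_map hsqrt measurable_fst, Measure.map_fst_prod, measure_univ,
      one_smul, hρdef]
  -- assemble
  have hassoc := measurePreserving_prodAssoc (stdCGaussVec n) stdCGauss unif01
  have step0 : Measure.map (fun p : (Fin n → ℂ) × ℂ × ℝ =>
      (Complex.exp (2 * Real.pi * Complex.I * (p.2.2 : ℂ)) *
        ysign (dotH p.1 x + (σ:ℂ) * p.2.1)) • p.1)
      ((stdCGaussVec n).prod (stdCGauss.prod unif01)) = ρ := by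
    rw [← hassoc.map_eq, Measure.map_map hφ hassoc.measurable]
    have hcomp : ((fun p : (Fin n → ℂ) × ℂ × ℝ =>
        (Complex.exp (2 * Real.pi * Complex.I * (p.2.2 : ℂ)) *
          ysign (dotH p.1 x + (σ:ℂ) * p.2.1)) • p.1) ∘ MeasurableEquiv.prodAssoc)
        = (fun q : ((Fin n → ℂ) × ℂ) × ℝ =>
          (Complex.exp (2 * Real.pi * Complex.I * (q.2 : ℂ)) *
            ysign (dotH q.1.1 x + (σ:ℂ) * q.1.2)) • q.1.1) := rfl
    rw [hcomp, step1, step2]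
  rw [step0, step3]


end
end
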